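/- arXiv:2003.03857 — 5 statements merged into one kernel-verified Lean document; each statement's English description precedes it below -/
import Mathlib

section
/- The number of canonical r-paths of length k having no simple vertex (i.e., every value appearing in the path appears at least twice) equals the 2-associated Stirling number of the second kind B_2(k,r), where B_2(k,r) = (k!/r!) * Σ over (j_1,...,j_r) with j_1 + ... + j_r = k and each j_ℓ ≥ 2 of 1/(j_1! ⋯ j_r!). -/
open Finset Equiv

/-- A path `I = (i_1, …, i_k)` of positive integers is canonical if `i_1 = 1` and
`i_l ≤ max{i_1, …, i_{l-1}} + 1` for every `l ≥ 2`. -/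
def IsCanonical {k : ℕ} (I : Fin k → ℕ) : Prop :=
  (∀ l, 1 ≤ I l) ∧
  ∀ l : Fin k, I l ≤ ((Finset.univ.filter fun m : Fin k => m < l).sup fun m => I m) + 1

namespace CanonicalAux


variable {k r : ℕ}

lemma filter_lt_eq (l : Fin k) :
    (Finset.univ.filter fun m : Fin k => m < l)
      = Finset.univ.filter fun m : Fin k => (m : ℕ) < (l : ℕ) :=
  Finset.filter_congr fun m _ => Iff.rfl

lemma prefix_image (I : Fin k → ℕ) (hI : IsCanonical I) (t : ℕ) :
    (Finset.univ.filter fun m : Fin k => (m : ℕ) < t).image I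
      = Finset.Icc 1 ((Finset.univ.filter fun m : Fin k => (m : ℕ) < t).sup I) := by
  induction t with
  | zero => simp
  | succ t ih =>
    by_cases ht : t < k
    · have hA : (Finset.univ.filter fun m : Fin k => (m : ℕ) < t + 1)
          = insert ⟨t, ht⟩ (Finset.univ.filter fun m : Fin k => (m : ℕ) < t) := by
        ext m
        simp only [Finset.mem_filter, Finset.mem_univ, true_and, Finset.mem_insert, Fin.ext_iff]
        omega
      have hcan := hI.2 ⟨t, ht⟩
      rw [filter_lt_eq] at hcan
      have h1 : 1 ≤ I ⟨t, ht⟩ := hI.1 _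
      rw [hA, Finset.image_insert, Finset.sup_insert, ih]
      set M := (Finset.univ.filter fun m : Fin k => (m : ℕ) < t).sup I with hM
      have hcan' : I ⟨t, ht⟩ ≤ M + 1 := hcan
      rcases Nat.lt_or_ge (I ⟨t, ht⟩) (M + 1) with hlt | hge
      · have hle : I ⟨t, ht⟩ ≤ M := by omega
        rw [sup_eq_right.mpr hle, Finset.insert_eq_self.mpr (Finset.mem_Icc.mpr ⟨h1, hle⟩)]
      · have heq : I ⟨t, ht⟩ = M + 1 := le_antisymm hcan' hge
        rw [heq, sup_eq_left.mpr (Nat.le_succ M)]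
        ext x
        simp only [Finset.mem_insert, Finset.mem_Icc]
        omega
    · have hA : (Finset.univ.filter fun m : Fin k => (m : ℕ) < t + 1)
          = Finset.univ.filter fun m : Fin k => (m : ℕ) < t := by
        apply Finset.filter_congr; intro m _
        have := m.isLt
        constructor <;> intro <;> omega
      rw [hA, ih]

lemma image_univ_eq_Icc (I : Fin k → ℕ) (hI : IsCanonical I) :
    Finset.univ.image I = Finset.Icc 1 (Finset.univ.sup I) := by
  have h := prefix_image I hI k
  have huniv : (Finset.univ.filter fun m : Fin k => (m : ℕ) < k) = Finset.univ := by
    apply Finset.filter_true_of_mem; intro m _; exact m.isLt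
  rwa [huniv] at h

lemma determined (I I' : Fin k → ℕ) (hI : IsCanonical I) (hI' : IsCanonical I')
    (h : ∀ l m : Fin k, I l = I m ↔ I' l = I' m) : I = I' := by
  have hnew : ∀ (J : Fin k → ℕ), IsCanonical J → ∀ l : Fin k, (¬ ∃ m, m < l ∧ J l = J m) →
      J l = (Finset.univ.filter fun m : Fin k => m < l).sup J + 1 := by
    intro J hJ l hexJ
    rw [filter_lt_eq]
    have hJm : J l ∉ (Finset.univ.filter fun m : Fin k => (m : ℕ) < (l : ℕ)).image J := by
      intro hmem
      obtain ⟨m, hm, he⟩ := Finset.mem_image.mp hmem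
      have hml : m < l := by
        have := (Finset.mem_filter.mp hm).2
        exact Fin.lt_def.mpr this
      exact hexJ ⟨m, hml, he.symm⟩
    rw [prefix_image J hJ (l : ℕ), Finset.mem_Icc] at hJm
    have h1 : 1 ≤ J l := hJ.1 l
    have h2 : J l ≤ ((Finset.univ.filter fun m : Fin k => (m : ℕ) < (l : ℕ)).sup J) + 1 := by
      have := hJ.2 l
      rwa [filter_lt_eq] at this
    omega
  have key : ∀ n : ℕ, ∀ l : Fin k, (l : ℕ) < n → I l = I' l := by
    intro n
    induction n with
    | zero => intro l hl; omega
    | succ n ih =>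
      intro l hl
      have ihm : ∀ m : Fin k, m < l → I m = I' m := fun m hm =>
        ih m (by have := Fin.lt_def.mp hm; omega)
      by_cases hex : ∃ m : Fin k, m < l ∧ I l = I m
      · obtain ⟨m, hm, he⟩ := hex
        rw [he, ihm m hm, ← (h l m).mp he]
      · have hex' : ¬ ∃ m : Fin k, m < l ∧ I' l = I' m := by
          rintro ⟨m, hm, he⟩; exact hex ⟨m, hm, (h l m).mpr he⟩
        have hsup : (Finset.univ.filter fun m : Fin k => m < l).sup I
            = (Finset.univ.filter fun m : Fin k => m < l).sup I' :=
          Finset.sup_congr rfl fun m hm => ihm m (Finset.mem_filter.mp hm).2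
        rw [hnew I hI l hex, hnew I' hI' l hex', hsup]
  funext l; exact key k l l.isLt



/-- There exists a function `Fin k → Fin r` with prescribed fiber cardinalities. -/
lemma exists_fn (f : Fin r → ℕ) (hf : ∑ i, f i = k) :
    ∃ g₀ : Fin k → Fin r, ∀ i, (Finset.univ.filter fun l => g₀ l = i).card = f i := by
  have hcard : Fintype.card (Σ i : Fin r, Fin (f i)) = Fintype.card (Fin k) := by
    simp [Fintype.card_sigma, hf]
  obtain e := Fintype.equivOfCardEq hcard
  refine ⟨fun l => (e.symm l).1, fun i => ?_⟩
  rw [← Fintype.card_subtype]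
  have e₁ : {l : Fin k // (e.symm l).1 = i} ≃ {x : Σ j : Fin r, Fin (f j) // x.1 = i} :=
    Equiv.subtypeEquiv e.symm fun l => Iff.rfl
  have e₂ : Fin (f i) ≃ {x : Σ j : Fin r, Fin (f j) // x.1 = i} := by
    refine Equiv.ofBijective (fun b => ⟨⟨i, b⟩, rfl⟩) ⟨?_, ?_⟩
    · intro a b h
      simpa using congrArg Subtype.val h
    · rintro ⟨⟨j, b⟩, rfl⟩
      exact ⟨b, rfl⟩
  rw [Fintype.card_congr (e₁.trans e₂.symm), Fintype.card_fin]

/-- The number of functions `Fin k → Fin r` with prescribed fiber cardinalities,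
times the product of factorials, is `k!`. -/
lemma card_fiberCount (f : Fin r → ℕ) (hf : ∑ i, f i = k) :
    (Finset.univ.filter fun g : Fin k → Fin r =>
        ∀ i, (Finset.univ.filter fun l => g l = i).card = f i).card * (∏ i, (f i).factorial)
      = k.factorial := by
  classical
  obtain ⟨g₀, hg₀⟩ := exists_fn f hf
  set T : Finset (Fin k → Fin r) := Finset.univ.filter fun g : Fin k → Fin r =>
    ∀ i, (Finset.univ.filter fun l => g l = i).card = f i with hT
  have hmem : ∀ π : Perm (Fin k), g₀ ∘ ⇑π ∈ T := by
    intro π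
    rw [hT, Finset.mem_filter]
    refine ⟨Finset.mem_univ _, fun i => ?_⟩
    rw [← hg₀ i]
    apply Finset.card_bij' (fun l _ => π l) (fun l _ => π.symm l)
    · intro l hl
      simp only [Finset.mem_filter, Finset.mem_univ, true_and, Function.comp_apply] at hl ⊢
      exact hl
    · intro l hl
      simp only [Finset.mem_filter, Finset.mem_univ, true_and, Function.comp_apply] at hl ⊢
      simpa using hl
    · intro l _; simp
    · intro l _; simp
  have key := Finset.card_eq_sum_card_fiberwise
    (s := (Finset.univ : Finset (Perm (Fin k)))) (t := T)
    (f := fun π : Perm (Fin k) => g₀ ∘ ⇑π) (fun π _ => hmem π)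
  have hfib : ∀ g ∈ T, ((Finset.univ : Finset (Perm (Fin k))).filter
      fun π : Perm (Fin k) => g₀ ∘ ⇑π = g).card = ∏ i, (f i).factorial := by
    intro g hg
    rw [hT, Finset.mem_filter] at hg
    have efib : ∀ i : Fin r, {a : Fin k // g a = i} ≃ {a : Fin k // g₀ a = i} := by
      intro i
      apply Fintype.equivOfCardEq
      rw [Fintype.card_subtype, Fintype.card_subtype, hg.2 i, hg₀ i]
    set π₀ : Fin k ≃ Fin k := Equiv.ofFiberEquiv efib with hπ₀
    have hπ₀g : ∀ a, g₀ (π₀ a) = g a := fun a => Equiv.ofFiberEquiv_map efib a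
    have estab : {σ : Perm (Fin k) // g₀ ∘ ⇑σ = g₀} ≃ {π : Perm (Fin k) // g₀ ∘ ⇑π = g} := by
      refine ⟨fun σ => ⟨π₀.trans σ.1, ?_⟩, fun π => ⟨π₀.symm.trans π.1, ?_⟩,
        fun σ => ?_, fun π => ?_⟩
      · funext x
        have h1 := congrFun σ.2 (π₀ x)
        simp only [Function.comp_apply] at h1 ⊢
        simp only [Equiv.trans_apply]
        rw [h1, hπ₀g]
      · funext x
        have h1 := congrFun π.2 (π₀.symm x)
        simp only [Function.comp_apply] at h1 ⊢
        simp only [Equiv.trans_apply]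
        rw [h1, ← hπ₀g (π₀.symm x), Equiv.apply_symm_apply]
      · apply Subtype.ext
        ext x
        simp
      · apply Subtype.ext
        ext x
        simp
    have h1 : ((Finset.univ : Finset (Perm (Fin k))).filter fun π : Perm (Fin k) => g₀ ∘ ⇑π = g).card
        = Fintype.card {π : Perm (Fin k) // g₀ ∘ ⇑π = g} := (Fintype.card_subtype _).symm
    rw [h1, ← Fintype.card_congr estab, DomMulAct.stabilizer_card g₀]
    apply Finset.prod_congr rfl
    intro i _
    rw [Fintype.card_subtype, hg₀ i]
  rw [Finset.sum_congr rfl hfib, Finset.sum_const, smul_eq_mul] at key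
  rw [← key, Finset.card_univ, Fintype.card_perm, Fintype.card_fin]



/-- The predicate from the theorem statement. -/
def P (k r : ℕ) (I : Fin k → ℕ) : Prop :=
  IsCanonical I ∧ (Finset.image I Finset.univ).card = r ∧
    ∀ v ∈ Finset.image I Finset.univ,
      2 ≤ (Finset.univ.filter fun l : Fin k => I l = v).card

lemma P_image {I : Fin k → ℕ} (hI : P k r I) :
    Finset.image I Finset.univ = Finset.Icc 1 r := by
  have h := image_univ_eq_Icc I hI.1
  have hc := hI.2.1
  rw [h] at hc ⊢
  rw [Nat.card_Icc] at hc
  have : Finset.univ.sup I = r := by omega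
  rw [this]

lemma P_lt {I : Fin k → ℕ} (hI : P k r I) (l : Fin k) : I l - 1 < r := by
  have hmem : I l ∈ Finset.image I Finset.univ := Finset.mem_image_of_mem I (Finset.mem_univ l)
  rw [P_image hI, Finset.mem_Icc] at hmem
  omega

/-- The map from (permutation, canonical path) to functions `Fin k → Fin r`. -/
noncomputable def Ψ (k r : ℕ) (p : Perm (Fin r) × {I : Fin k → ℕ // P k r I}) :
    Fin k → Fin r :=
  fun l => p.1 ⟨p.2.1 l - 1, P_lt p.2.2 l⟩

lemma Ψ_fiber (p : Perm (Fin r) × {I : Fin k → ℕ // P k r I}) (i : Fin r) :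
    (Finset.univ.filter fun l => Ψ k r p l = i)
      = Finset.univ.filter fun l => p.2.1 l = ((p.1.symm i : Fin r) : ℕ) + 1 := by
  apply Finset.filter_congr
  intro l _
  unfold Ψ
  rw [Equiv.apply_eq_iff_eq_symm_apply, Fin.ext_iff]
  have h1 : 1 ≤ p.2.1 l := p.2.2.1.1 l
  simp only [Fin.val_mk]
  omega

lemma Ψ_mem (p : Perm (Fin r) × {I : Fin k → ℕ // P k r I}) :
    ∀ i, 2 ≤ (Finset.univ.filter fun l => Ψ k r p l = i).card := by
  intro i
  rw [Ψ_fiber]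
  apply p.2.2.2.2
  rw [P_image p.2.2, Finset.mem_Icc]
  have := (p.1.symm i).isLt
  omega

lemma Ψ_injective : Function.Injective (Ψ k r) := by
  rintro ⟨σ, I, hI⟩ ⟨σ', I', hI'⟩ h
  have hfun : ∀ l : Fin k, σ ⟨I l - 1, P_lt hI l⟩ = σ' ⟨I' l - 1, P_lt hI' l⟩ :=
    fun l => congrFun h l
  have hiff : ∀ l m : Fin k, I l = I m ↔ I' l = I' m := by
    intro l m
    have e1 : I l = I m ↔ σ ⟨I l - 1, P_lt hI l⟩ = σ ⟨I m - 1, P_lt hI m⟩ := by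
      rw [σ.injective.eq_iff, Fin.ext_iff, Fin.val_mk, Fin.val_mk]
      have := hI.1.1 l; have := hI.1.1 m
      omega
    have e2 : I' l = I' m ↔ σ' ⟨I' l - 1, P_lt hI' l⟩ = σ' ⟨I' m - 1, P_lt hI' m⟩ := by
      rw [σ'.injective.eq_iff, Fin.ext_iff, Fin.val_mk, Fin.val_mk]
      have := hI'.1.1 l; have := hI'.1.1 m
      omega
    rw [e1, e2, hfun l, hfun m]
  have hII : I = I' := determined I I' hI.1 hI'.1 hiff
  subst hII
  have hσ : σ = σ' := by
    apply Equiv.ext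
    intro q
    have hq : ((q : ℕ) + 1) ∈ Finset.image I Finset.univ := by
      rw [P_image hI, Finset.mem_Icc]
      have := q.isLt
      omega
    obtain ⟨l, _, hl⟩ := Finset.mem_image.mp hq
    have hql : q = ⟨I l - 1, P_lt hI l⟩ := by
      apply Fin.ext
      have hv : ((⟨I l - 1, P_lt hI l⟩ : Fin r) : ℕ) = I l - 1 := rfl
      have h1 := hI.1.1 l
      omega
    rw [hql]
    exact hfun l
  subst hσ
  rfl

set_option maxHeartbeats 1000000 in
lemma Ψ_surjective (g : Fin k → Fin r)
    (hQg : ∀ i, 2 ≤ (Finset.univ.filter fun l => g l = i).card) :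
    ∃ p, Ψ k r p = g := by
  have hne : ∀ i, (Finset.univ.filter fun l => g l = i).Nonempty := by
    intro i
    apply Finset.card_pos.mp
    have := hQg i
    omega
  set m : Fin r → Fin k := fun i => (Finset.univ.filter fun l => g l = i).min' (hne i) with hm
  have hgm : ∀ i, g (m i) = i := fun i =>
    (Finset.mem_filter.mp ((Finset.univ.filter fun l => g l = i).min'_mem (hne i))).2
  have hminj : Function.Injective m := by
    intro i j h
    rw [← hgm i, ← hgm j, h]
  set F : Fin r → ℕ := fun i => (Finset.univ.filter fun j : Fin r => m j ≤ m i).card with hF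
  have hF1 : ∀ i, 1 ≤ F i := by
    intro i
    apply Finset.card_pos.mpr
    exact ⟨i, by simp⟩
  have hFr : ∀ i, F i ≤ r := by
    intro i
    calc F i ≤ (Finset.univ : Finset (Fin r)).card := Finset.card_filter_le _ _
    _ = r := by simp
  have hFmono : ∀ i j, m i < m j → F i < F j := by
    intro i j hij
    apply Finset.card_lt_card
    rw [Finset.ssubset_iff_of_subset]
    · refine ⟨j, by simp, ?_⟩
      simp only [Finset.mem_filter, Finset.mem_univ, true_and]
      exact not_le.mpr hij
    · intro x hx
      simp only [Finset.mem_filter, Finset.mem_univ, true_and] at hx ⊢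
      exact le_trans hx hij.le
  have hFinj : Function.Injective F := by
    intro i j hij
    by_contra hne'
    rcases lt_trichotomy (m i) (m j) with h | h | h
    · exact absurd hij (Nat.ne_of_lt (hFmono i j h))
    · exact hne' (hminj h)
    · exact absurd hij.symm (Nat.ne_of_lt (hFmono j i h))
  set I : Fin k → ℕ := fun l => F (g l) with hI
  have hfibI : ∀ i : Fin r, (Finset.univ.filter fun l => I l = F i)
      = Finset.univ.filter fun l => g l = i := by
    intro i
    apply Finset.filter_congr
    intro l _
    exact ⟨fun h => hFinj h, fun h => by show F (g l) = F i; rw [h]⟩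
  have hgsurj : Finset.image g Finset.univ = Finset.univ := by
    apply Finset.eq_univ_iff_forall.mpr
    intro i
    exact Finset.mem_image.mpr ⟨m i, Finset.mem_univ _, hgm i⟩
  have himgI : Finset.image I Finset.univ = Finset.image F Finset.univ := by
    have : Finset.image I Finset.univ = Finset.image F (Finset.image g Finset.univ) := by
      rw [Finset.image_image]
      rfl
    rw [this, hgsurj]
  have hcardI : (Finset.image I Finset.univ).card = r := by
    rw [himgI, Finset.card_image_of_injective _ hFinj, Finset.card_univ, Fintype.card_fin]
  have hcanI : IsCanonical I := by
    refine ⟨fun l => hF1 (g l), ?_⟩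
    intro l
    set M := ((Finset.univ.filter fun m' : Fin k => m' < l).sup fun m' => I m') with hM
    have hml : m (g l) ≤ l := by
      apply Finset.min'_le
      exact Finset.mem_filter.mpr ⟨Finset.mem_univ l, rfl⟩
    rcases eq_or_lt_of_le hml with heq | hlt
    · -- l is the first occurrence of g l
      have hiA : g l ∈ Finset.univ.filter fun j : Fin r => m j ≤ m (g l) := by simp
      have herase : ∀ j ∈ (Finset.univ.filter fun j : Fin r => m j ≤ m (g l)).erase (g l),
          F j ∈ Finset.Icc 1 M := by
        intro j hj
        obtain ⟨hjne, hjA⟩ := Finset.mem_erase.mp hj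
        have hmj : m j ≤ m (g l) := (Finset.mem_filter.mp hjA).2
        have hmjlt : m j < l := by
          rcases lt_or_eq_of_le hmj with h | h
          · exact lt_of_lt_of_le h hml
          · exact absurd (hminj h) hjne
        have hsup : I (m j) ≤ M := by
          rw [hM]
          exact Finset.le_sup (Finset.mem_filter.mpr ⟨Finset.mem_univ _, hmjlt⟩)
        have hImj : I (m j) = F j := by show F (g (m j)) = F j; rw [hgm j]
        rw [Finset.mem_Icc]
        exact ⟨hF1 j, by omega⟩
      have hcard := Finset.card_le_card_of_injOn F herase
        (fun a _ b _ hab => hFinj hab)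
      rw [Nat.card_Icc] at hcard
      have hc := Finset.card_erase_add_one hiA
      show (Finset.univ.filter fun j : Fin r => m j ≤ m (g l)).card ≤ M + 1
      omega
    · have hsup : I (m (g l)) ≤ M := by
        rw [hM]
        exact Finset.le_sup (Finset.mem_filter.mpr ⟨Finset.mem_univ _, hlt⟩)
      have heqI : I (m (g l)) = I l := by show F (g (m (g l))) = F (g l); rw [hgm (g l)]
      omega
  have hfib2 : ∀ v ∈ Finset.image I Finset.univ,
      2 ≤ (Finset.univ.filter fun l : Fin k => I l = v).card := by
    intro v hv
    rw [himgI] at hv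
    obtain ⟨i, _, rfl⟩ := Finset.mem_image.mp hv
    rw [hfibI i]
    exact hQg i
  have helt : ∀ i, F i - 1 < r := by
    intro i
    have := hF1 i; have := hFr i
    omega
  set e : Fin r → Fin r := fun i => ⟨F i - 1, helt i⟩ with he
  have heinj : Function.Injective e := by
    intro i j hij
    apply hFinj
    have hv := congrArg Fin.val hij
    simp only [he, Fin.val_mk] at hv
    have := hF1 i; have := hF1 j
    omega
  have hebij := Finite.injective_iff_bijective.mp heinj
  refine ⟨⟨(Equiv.ofBijective e hebij).symm, ⟨I, hcanI, hcardI, hfib2⟩⟩, ?_⟩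
  funext l
  show (Equiv.ofBijective e hebij).symm ⟨I l - 1, _⟩ = g l
  have hq : (⟨I l - 1, P_lt (⟨hcanI, hcardI, hfib2⟩ : P k r I) l⟩ : Fin r) = e (g l) := by
    apply Fin.ext
    simp only [he, Fin.val_mk]
    rfl
  rw [hq]
  exact (Equiv.ofBijective e hebij).symm_apply_apply (g l)



lemma count_eq (k r : ℕ) :
    (Finset.univ.filter fun g : Fin k → Fin r =>
        ∀ i, 2 ≤ (Finset.univ.filter fun l => g l = i).card).card
      = r.factorial * ({I : Fin k → ℕ | P k r I}.ncard) := by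
  have hbij : Function.Bijective (fun p : Perm (Fin r) × {I : Fin k → ℕ // P k r I} =>
      (⟨Ψ k r p, Ψ_mem p⟩ : {g : Fin k → Fin r //
        ∀ i, 2 ≤ (Finset.univ.filter fun l => g l = i).card})) := by
    constructor
    · intro p q h
      exact Ψ_injective (congrArg Subtype.val h)
    · rintro ⟨g, hg⟩
      obtain ⟨p, hp⟩ := Ψ_surjective g hg
      exact ⟨p, Subtype.ext hp⟩
  have hcard := Nat.card_congr (Equiv.ofBijective _ hbij)
  rw [Nat.card_prod] at hcard
  have h1 : Nat.card (Perm (Fin r)) = r.factorial := by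
    rw [Nat.card_eq_fintype_card, Fintype.card_perm, Fintype.card_fin]
  have h2 : Nat.card {I : Fin k → ℕ // P k r I} = ({I : Fin k → ℕ | P k r I}.ncard) :=
    Nat.card_coe_set_eq _
  have h3 : Nat.card {g : Fin k → Fin r //
      ∀ i, 2 ≤ (Finset.univ.filter fun l => g l = i).card}
      = (Finset.univ.filter fun g : Fin k → Fin r =>
        ∀ i, 2 ≤ (Finset.univ.filter fun l => g l = i).card).card := by
    rw [Nat.card_eq_fintype_card, Fintype.card_subtype]
  rw [h1, h2, h3] at hcard
  exact hcard.symm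

end CanonicalAux

theorem card_canonical_paths_no_simple_vertex (k r : ℕ) (h1 : 1 ≤ r) (h2 : r ≤ k) :
    ({I : Fin k → ℕ | IsCanonical I ∧ (Finset.image I Finset.univ).card = r ∧
        ∀ v ∈ Finset.image I Finset.univ,
          2 ≤ (Finset.univ.filter fun l : Fin k => I l = v).card}.ncard : ℚ)
      = ((Nat.factorial k : ℚ) / (Nat.factorial r : ℚ)) *
          ∑ f ∈ (Finset.Nat.antidiagonalTuple r k).filter fun f => ∀ i, 2 ≤ f i,
            ∏ i, (1 : ℚ) / (Nat.factorial (f i) : ℚ) := by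
  classical
  open CanonicalAux in
  have hkey := CanonicalAux.count_eq k r
  set T : Finset (Fin k → Fin r) := Finset.univ.filter fun g : Fin k → Fin r =>
    ∀ i, 2 ≤ (Finset.univ.filter fun l => g l = i).card with hT
  set A : Finset (Fin r → ℕ) :=
    (Finset.Nat.antidiagonalTuple r k).filter fun f => ∀ i, 2 ≤ f i with hA
  have hsplit : T.card = ∑ f ∈ A,
      (Finset.univ.filter fun g : Fin k → Fin r =>
        ∀ i, (Finset.univ.filter fun l => g l = i).card = f i).card := by
    have hmem : ∀ g ∈ T,
        (fun i : Fin r => (Finset.univ.filter fun l => g l = i).card) ∈ A := by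
      intro g hg
      rw [hT, Finset.mem_filter] at hg
      rw [hA, Finset.mem_filter]
      refine ⟨Finset.Nat.mem_antidiagonalTuple.mpr ?_, hg.2⟩
      have := Finset.card_eq_sum_card_fiberwise
        (s := (Finset.univ : Finset (Fin k))) (t := (Finset.univ : Finset (Fin r)))
        (f := g) (fun l _ => Finset.mem_univ _)
      rw [Finset.card_univ, Fintype.card_fin] at this
      exact this.symm
    rw [Finset.card_eq_sum_card_fiberwise hmem]
    apply Finset.sum_congr rfl
    intro f hf
    rw [hA, Finset.mem_filter] at hf
    congr 1
    ext g
    simp only [Finset.mem_filter, Finset.mem_univ, true_and, hT, funext_iff]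
    constructor
    · rintro ⟨_, h⟩
      exact h
    · intro h
      exact ⟨fun i => by rw [h i]; exact hf.2 i, h⟩
  have hcastf : ∀ f ∈ A, (((Finset.univ.filter fun g : Fin k → Fin r =>
      ∀ i, (Finset.univ.filter fun l => g l = i).card = f i).card : ℕ) : ℚ)
      = (Nat.factorial k : ℚ) * ∏ i, (1 : ℚ) / (Nat.factorial (f i) : ℚ) := by
    intro f hf
    rw [hA, Finset.mem_filter] at hf
    have hsum : ∑ i, f i = k := Finset.Nat.mem_antidiagonalTuple.mp hf.1
    have h := CanonicalAux.card_fiberCount f hsum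
    have hcast := congrArg (Nat.cast : ℕ → ℚ) h
    push_cast at hcast
    have hprodne : (∏ i, ((f i).factorial : ℚ)) ≠ 0 := by positivity
    have hprod : (∏ i, (1 : ℚ) / (Nat.factorial (f i) : ℚ))
        = (∏ i, ((f i).factorial : ℚ))⁻¹ := by
      rw [← Finset.prod_inv_distrib]
      simp [one_div]
    rw [hprod, eq_comm, mul_inv_eq_iff_eq_mul₀ hprodne]
    exact hcast.symm
  have hTQ : ((T.card : ℕ) : ℚ) = (Nat.factorial k : ℚ) *
      ∑ f ∈ A, ∏ i, (1 : ℚ) / (Nat.factorial (f i) : ℚ) := by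
    rw [hsplit]
    push_cast
    rw [Finset.sum_congr rfl hcastf, ← Finset.mul_sum]
  have hrne : ((Nat.factorial r : ℚ)) ≠ 0 := by positivity
  have hkeyQ := congrArg (Nat.cast : ℕ → ℚ) hkey
  push_cast at hkeyQ
  rw [hTQ] at hkeyQ
  rw [div_mul_eq_mul_div, eq_div_iff hrne]
  have : ({I : Fin k → ℕ | IsCanonical I ∧ (Finset.image I Finset.univ).card = r ∧
        ∀ v ∈ Finset.image I Finset.univ,
          2 ≤ (Finset.univ.filter fun l : Fin k => I l = v).card}.ncard : ℚ)
      = ({I : Fin k → ℕ | CanonicalAux.P k r I}.ncard : ℚ) := rfl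
  rw [this]
  linarith [hkeyQ]
end

section
/- The reduced Stirling numbers of the second kind satisfy B^d(k, r) = B(k-d+1, r-d+1) for k ≥ r ≥ d, where B^d(k,r) counts the partitions of {1,...,k} into r nonempty subsets such that any two elements in the same subset have distance at least d, and B is the Stirling number of the second kind. -/
open Finset


/-- The Stirling number of the second kind `B(k,r)`. -/
noncomputable def stirlingB (k r : ℕ) : ℕ :=
  {P : Finpartition (Finset.univ : Finset (Fin k)) | P.parts.card = r}.ncard

/-- The reduced Stirling number of the second kind `B^d(k,r)`: the number of partitions of
`{1,…,k}` into `r` nonempty blocks such that any two distinct elements of the same block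
are at distance at least `d`. -/
noncomputable def stirlingBd (d k r : ℕ) : ℕ :=
  {P : Finpartition (Finset.univ : Finset (Fin k)) |
    P.parts.card = r ∧
    ∀ b ∈ P.parts, ∀ i ∈ b, ∀ j ∈ b, i ≠ j → d ≤ Nat.dist i.val j.val}.ncard


namespace RS

variable {n : ℕ}

/-- The root of `x` under the predecessor map `R`: iterate `R` as long as it decreases. -/
def root (R : Fin n → Option (Fin n)) (x : Fin n) : Fin n :=
  match hx : R x with
  | none => x
  | some y => if h : y < x then root R y else x
termination_by x.val
decreasing_by exact h

/-- `Reach R x z` : `z` is obtained from `x` by iterating `R`. -/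
inductive Reach (R : Fin n → Option (Fin n)) : Fin n → Fin n → Prop
  | refl (x) : Reach R x x
  | step {x y z} : R x = some y → Reach R y z → Reach R x z

variable {R : Fin n → Option (Fin n)}

theorem root_none (hx : R x = none) : root R x = x := by
  rw [root, hx]

theorem root_some (hx : R x = some y) (h : y < x) : root R x = root R y := by
  rw [root, hx]; simp [h]

section Lt

variable (hlt : ∀ {j i : Fin n}, R j = some i → i < j)
include hlt

theorem Reach.le (h : Reach R x z) : z ≤ x := by
  induction h with
  | refl => exact le_refl _
  | step hxy _ ih => exact le_trans ih (le_of_lt (hlt hxy))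

theorem reach_root (x : Fin n) : Reach R x (root R x) := by
  cases hx : R x with
  | none => rw [root_none hx]; exact Reach.refl x
  | some y =>
    rw [root_some hx (hlt hx)]
    exact Reach.step hx (reach_root y)
termination_by x.val
decreasing_by exact hlt hx

theorem root_eq_of_reach (h : Reach R x z) : root R x = root R z := by
  induction h with
  | refl => rfl
  | step hxy _ ih => rw [root_some hxy (hlt hxy), ih]

theorem root_le (x : Fin n) : root R x ≤ x := (reach_root hlt x).le hlt

theorem R_root (x : Fin n) : R (root R x) = none := by
  cases hx : R x with
  | none => rwa [root_none hx]
  | some y => rw [root_some hx (hlt hx)]; exact R_root y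
termination_by x.val
decreasing_by exact hlt hx

omit hlt in
theorem Reach.trans (h : Reach R x y) (h' : Reach R y z) : Reach R x z := by
  induction h with
  | refl => exact h'
  | step hxy _ ih => exact Reach.step hxy (ih h')

omit hlt in
theorem reach_inv (h : Reach R x z) (hne : x ≠ z) (hy : R x = some y) : Reach R y z := by
  cases h with
  | refl => exact absurd rfl hne
  | step hxy h' => rw [hy] at hxy; cases hxy; exact h'

omit hlt in
/-- the last step of a nontrivial reach -/
theorem reach_last (h : Reach R x z) (hne : x ≠ z) : ∃ w, Reach R x w ∧ R w = some z := by
  induction h with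
  | refl => exact absurd rfl hne
  | step hxy hyz ih =>
    rename_i x y z
    by_cases h' : y = z
    · exact ⟨x, Reach.refl x, h' ▸ hxy⟩
    · obtain ⟨w, hw1, hw2⟩ := ih h'
      exact ⟨w, Reach.step hxy hw1, hw2⟩

variable (hinj : ∀ {j₁ j₂ i : Fin n}, R j₁ = some i → R j₂ = some i → j₁ = j₂)
include hinj

theorem reach_of_root_eq (h : root R x = root R y) (hxy : x ≤ y) : Reach R y x := by
  rcases eq_or_lt_of_le hxy with rfl | hxy
  · exact Reach.refl x
  · cases hy : R y with
    | none =>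
      exfalso
      have : root R y = y := root_none hy
      have hx := root_le hlt x
      rw [this] at h; rw [h] at hx
      exact absurd (lt_of_le_of_lt hx hxy) (lt_irrefl _)
    | some z =>
      have hzy : z < y := hlt hy
      have hrz : root R z = root R x := by
        rw [← root_some hy hzy, ← h]
      rcases le_or_gt x z with hxz | hzx
      · exact Reach.step hy (reach_of_root_eq hrz.symm hxz)
      · -- z < x : x reaches z, contradiction with injectivity
        exfalso
        have hxr : Reach R x z := reach_of_root_eq hrz (le_of_lt hzx)
        obtain ⟨w, hw1, hw2⟩ := reach_last hxr (ne_of_gt hzx)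
        have : w = y := hinj hw2 hy
        have hwx : w ≤ x := hw1.le hlt
        rw [this] at hwx
        exact absurd (lt_of_le_of_lt hwx hxy) (lt_irrefl _)
termination_by y.val
decreasing_by
  · exact hlt hy
  · exact hxy

theorem succ_iff {i j : Fin n} :
    R j = some i ↔ root R i = root R j ∧ i < j ∧
      ∀ l, i < l → l < j → root R l ≠ root R j := by
  constructor
  · intro hj
    have h1 : root R j = root R i := root_eq_of_reach hlt (Reach.step hj (Reach.refl i))
    refine ⟨h1.symm, hlt hj, fun l hil hlj hl => ?_⟩
    have hr : Reach R j l := reach_of_root_eq hlt hinj hl (le_of_lt hlj)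
    have : Reach R i l := reach_inv hr (ne_of_gt hlj) hj
    exact absurd (this.le hlt) (not_le_of_gt hil)
  · rintro ⟨h1, h2, h3⟩
    have hr : Reach R j i := reach_of_root_eq hlt hinj h1 (le_of_lt h2)
    cases hy : R j with
    | none =>
      exfalso
      cases hr with
      | refl => exact absurd rfl (ne_of_gt h2).symm
      | step hxy _ => rw [hy] at hxy; exact absurd hxy (by simp)
    | some y =>
      have hri : Reach R y i := reach_inv hr (ne_of_gt h2) hy
      have hiy : i ≤ y := hri.le hlt
      rcases eq_or_lt_of_le hiy with rfl | hiy'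
      · rfl
      · exfalso
        refine h3 y hiy' (hlt hy) ?_
        rw [← root_some hy (hlt hy)]

theorem none_iff {j : Fin n} :
    R j = none ↔ ∀ l, l < j → root R l ≠ root R j := by
  constructor
  · intro hj l hlj hl
    have : root R j = j := root_none hj
    rw [this] at hl
    exact absurd (lt_of_le_of_lt (hl ▸ root_le hlt l) hlj) (lt_irrefl _)
  · intro h
    cases hj : R j with
    | none => rfl
    | some i =>
      exfalso
      have := (succ_iff hlt hinj).mp hj
      exact h i this.2.1 (this.1 ▸ rfl)

end Lt


/-- The setoid whose classes are the chains of the predecessor map `R`. -/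
def rootSetoid (R : Fin n → Option (Fin n)) : Setoid (Fin n) :=
  ⟨fun x y => root R x = root R y,
    ⟨fun _ => rfl, fun h => h.symm, fun h h' => h.trans h'⟩⟩

instance (R : Fin n → Option (Fin n)) : DecidableRel (rootSetoid R).r :=
  fun _ _ => instDecidableEqFin n _ _

/-- The finpartition of `Fin n` whose blocks are the chains of the predecessor map `R`. -/
def toPart (R : Fin n → Option (Fin n)) : Finpartition (univ : Finset (Fin n)) :=
  Finpartition.ofSetoid (rootSetoid R)

theorem mem_part_toPart {a b : Fin n} : b ∈ (toPart R).part a ↔ root R a = root R b :=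
  Finpartition.mem_part_ofSetoid_iff_rel (s := rootSetoid R)

section Lt

variable (hlt : ∀ {j i : Fin n}, R j = some i → i < j)
include hlt

theorem root_root (x : Fin n) : root R (root R x) = root R x :=
  (root_eq_of_reach hlt (reach_root hlt x)).symm

/-- The number of parts equals the number of elements with no predecessor. -/
theorem card_parts_toPart :
    (toPart R).parts.card = (univ.filter (fun x => R x = none)).card := by
  apply Finset.card_bij (fun B hB => B.min' ((toPart R).nonempty_of_mem_parts hB))
  · intro B hB
    set m := B.min' ((toPart R).nonempty_of_mem_parts hB) with hm
    have hmB : m ∈ B := Finset.min'_mem _ _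
    have hpart : (toPart R).part m = B := Finpartition.part_eq_of_mem _ hB hmB
    have hroot : root R m ∈ B := by
      rw [← hpart]; exact mem_part_toPart.mpr (root_root hlt m).symm
    have h1 : m ≤ root R m := Finset.min'_le _ _ hroot
    have h2 : root R m ≤ m := root_le hlt m
    have : root R m = m := le_antisymm h2 h1
    simp only [Finset.mem_filter, Finset.mem_univ, true_and]
    rw [← this]
    exact R_root hlt m
  · intro B₁ hB₁ B₂ hB₂ h
    exact (toPart R).eq_of_mem_parts hB₁ hB₂ (h ▸ Finset.min'_mem _ _) (Finset.min'_mem _ _)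
  · intro x hx
    simp only [Finset.mem_filter, Finset.mem_univ, true_and] at hx
    have hxu : x ∈ (univ : Finset (Fin n)) := Finset.mem_univ x
    refine ⟨(toPart R).part x, (toPart R).part_mem.2 hxu, ?_⟩
    have hrx : root R x = x := root_none hx
    apply le_antisymm
    · exact Finset.min'_le _ _ ((toPart R).mem_part hxu)
    · apply Finset.le_min'
      intro y hy
      have : root R x = root R y := mem_part_toPart.mp hy
      rw [hrx] at this
      exact this ▸ root_le hlt y

end Lt

/-- The predecessor map of a finpartition: `Rof P j` is the largest element of the
block of `j` smaller than `j`, if any. -/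
def Rof (P : Finpartition (univ : Finset (Fin n))) (j : Fin n) : Option (Fin n) :=
  if h : ((P.part j).filter (· < j)).Nonempty then some (((P.part j).filter (· < j)).max' h)
  else none

theorem Rof_some_iff {P : Finpartition (univ : Finset (Fin n))} {i j : Fin n} :
    Rof P j = some i ↔ i ∈ P.part j ∧ i < j ∧ ∀ l ∈ P.part j, l < j → l ≤ i := by
  unfold Rof
  split
  · rename_i h
    rw [Option.some_inj]
    constructor
    · rintro rfl
      have hmem := Finset.max'_mem _ h
      rw [Finset.mem_filter] at hmem
      refine ⟨hmem.1, hmem.2, fun l hl hlj => ?_⟩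
      refine Finset.le_max' _ _ ?_
      rw [Finset.mem_filter]
      exact ⟨hl, hlj⟩
    · rintro ⟨h1, h2, h3⟩
      apply le_antisymm
      · have hmem := Finset.max'_mem _ h
        rw [Finset.mem_filter] at hmem
        exact h3 _ hmem.1 hmem.2
      · refine Finset.le_max' _ _ ?_
        rw [Finset.mem_filter]
        exact ⟨h1, h2⟩
  · rename_i h
    exact iff_of_false (by simp) fun ⟨h1, h2, _⟩ => h ⟨i, Finset.mem_filter.mpr ⟨h1, h2⟩⟩

theorem Rof_none_iff {P : Finpartition (univ : Finset (Fin n))} {j : Fin n} :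
    Rof P j = none ↔ ∀ l ∈ P.part j, ¬ l < j := by
  unfold Rof
  split
  · rename_i h
    obtain ⟨l, hl⟩ := h
    rw [Finset.mem_filter] at hl
    exact iff_of_false (by simp) fun hc => hc l hl.1 hl.2
  · rename_i h
    exact iff_of_true rfl fun l hl hlj => h ⟨l, Finset.mem_filter.mpr ⟨hl, hlj⟩⟩

theorem Rof_lt {P : Finpartition (univ : Finset (Fin n))} {i j : Fin n}
    (h : Rof P j = some i) : i < j := (Rof_some_iff.mp h).2.1

theorem Rof_inj {P : Finpartition (univ : Finset (Fin n))} {j₁ j₂ i : Fin n}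
    (h₁ : Rof P j₁ = some i) (h₂ : Rof P j₂ = some i) : j₁ = j₂ := by
  obtain ⟨m₁, l₁, x₁⟩ := Rof_some_iff.mp h₁
  obtain ⟨m₂, l₂, x₂⟩ := Rof_some_iff.mp h₂
  have hpp : P.part j₁ = P.part j₂ :=
    P.eq_of_mem_parts (P.part_mem.2 (Finset.mem_univ _)) (P.part_mem.2 (Finset.mem_univ _)) m₁ m₂
  by_contra hne
  rcases lt_or_gt_of_ne hne with h | h
  · have : j₁ ∈ P.part j₂ := hpp ▸ P.mem_part (Finset.mem_univ j₁)
    exact absurd (x₂ j₁ this h) (not_le_of_gt l₁)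
  · have : j₂ ∈ P.part j₁ := hpp ▸ P.mem_part (Finset.mem_univ j₂)
    exact absurd (x₁ j₂ this h) (not_le_of_gt l₂)

theorem reach_Rof_mem_part {P : Finpartition (univ : Finset (Fin n))} {x z : Fin n}
    (h : Reach (Rof P) x z) : z ∈ P.part x := by
  induction h with
  | refl x => exact P.mem_part (Finset.mem_univ x)
  | @step x y z hxy _ ih =>
    have hy : y ∈ P.part x := (Rof_some_iff.mp hxy).1
    have hpp : P.part y = P.part x :=
      (P.mem_part_iff_part_eq_part (Finset.mem_univ y) (Finset.mem_univ x)).mp hy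
    exact hpp ▸ ih

theorem root_Rof_mem_part (P : Finpartition (univ : Finset (Fin n))) (x : Fin n) :
    root (Rof P) x ∈ P.part x :=
  reach_Rof_mem_part (reach_root (fun h => Rof_lt h) x)

theorem root_Rof_eq_iff {P : Finpartition (univ : Finset (Fin n))} {x y : Fin n} :
    root (Rof P) x = root (Rof P) y ↔ P.part x = P.part y := by
  constructor
  · intro h
    have h1 := root_Rof_mem_part P x
    have h2 := root_Rof_mem_part P y
    rw [h] at h1
    exact P.eq_of_mem_parts (P.part_mem.2 (Finset.mem_univ _)) (P.part_mem.2 (Finset.mem_univ _)) h1 h2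
  · intro h
    -- both roots are the min' of the common part
    have key : ∀ w : Fin n, root (Rof P) w = (P.part w).min' ⟨w, P.mem_part (Finset.mem_univ w)⟩ := by
      intro w
      have hlt : ∀ {j i : Fin n}, Rof P j = some i → i < j := fun h => Rof_lt h
      have hmem := root_Rof_mem_part P w
      have hnone : Rof P (root (Rof P) w) = none := R_root hlt w
      have hpp : P.part (root (Rof P) w) = P.part w :=
        (P.mem_part_iff_part_eq_part (Finset.mem_univ _) (Finset.mem_univ _)).mp hmem
      have hmin := Rof_none_iff.mp hnone
      rw [hpp] at hmin
      apply le_antisymm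
      · apply Finset.le_min'
        intro y hy
        exact le_of_not_gt (hmin y hy)
      · exact Finset.min'_le _ _ hmem
    rw [key x, key y]
    simp only [h]

theorem part_ext {P Q : Finpartition (univ : Finset (Fin n))}
    (h : ∀ x, P.part x = Q.part x) : P = Q := by
  ext B
  constructor
  · intro hB
    obtain ⟨x, hx⟩ := P.nonempty_of_mem_parts hB
    have hPx : P.part x = B := P.part_eq_of_mem hB hx
    rw [← hPx, h]
    exact Q.part_mem.2 (Finset.mem_univ x)
  · intro hB
    obtain ⟨x, hx⟩ := Q.nonempty_of_mem_parts hB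
    have hQx : Q.part x = B := Q.part_eq_of_mem hB hx
    rw [← hQx, ← h]
    exact P.part_mem.2 (Finset.mem_univ x)

theorem toPart_Rof (P : Finpartition (univ : Finset (Fin n))) : toPart (Rof P) = P := by
  apply part_ext
  intro x
  ext y
  rw [mem_part_toPart, root_Rof_eq_iff,
    P.mem_part_iff_part_eq_part (Finset.mem_univ y) (Finset.mem_univ x)]
  exact eq_comm

theorem Rof_toPart
    (hlt : ∀ {j i : Fin n}, R j = some i → i < j)
    (hinj : ∀ {j₁ j₂ i : Fin n}, R j₁ = some i → R j₂ = some i → j₁ = j₂) :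
    Rof (toPart R) = R := by
  funext j
  cases hj : R j with
  | some i =>
    obtain ⟨h1, h2, h3⟩ := (succ_iff hlt hinj).mp hj
    apply Rof_some_iff.mpr
    refine ⟨mem_part_toPart.mpr h1.symm, h2, fun l hl hlj => ?_⟩
    by_contra hcon
    exact h3 l (not_le.mp hcon) hlj (mem_part_toPart.mp hl).symm
  | none =>
    apply Rof_none_iff.mpr
    intro l hl hlj
    exact (none_iff hlt hinj).mp hj l hlj (mem_part_toPart.mp hl).symm

/-- The regularity condition of `stirlingBd`. -/
def Reg (d : ℕ) (P : Finpartition (univ : Finset (Fin n))) : Prop :=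
  ∀ b ∈ P.parts, ∀ i ∈ b, ∀ j ∈ b, i ≠ j → d ≤ Nat.dist i.val j.val

theorem reg_iff {d : ℕ} {P : Finpartition (univ : Finset (Fin n))} :
    Reg d P ↔ ∀ i j : Fin n, j ∈ P.part i → i ≠ j → d ≤ Nat.dist i.val j.val := by
  constructor
  · intro h i j hj hne
    exact h _ (P.part_mem.2 (Finset.mem_univ i)) i (P.mem_part (Finset.mem_univ i)) j hj hne
  · intro h b hb i hi j hj hne
    have : P.part i = b := P.part_eq_of_mem hb hi
    exact h i j (this ▸ hj) hne

theorem reg_toPart {d : ℕ}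
    (hltd : ∀ {j i : Fin n}, R j = some i → i.val + d ≤ j.val)
    (hlt : ∀ {j i : Fin n}, R j = some i → i < j)
    (hinj : ∀ {j₁ j₂ i : Fin n}, R j₁ = some i → R j₂ = some i → j₁ = j₂) :
    Reg d (toPart R) := by
  have key : ∀ i j : Fin n, i < j → root R i = root R j → i.val + d ≤ j.val := by
    intro i j hij hroot
    have hr : Reach R j i := reach_of_root_eq hlt hinj hroot (le_of_lt hij)
    cases hr with
    | refl => exact absurd rfl (ne_of_lt hij)
    | step hy hr' =>
      rename_i y
      have h1 : i ≤ y := hr'.le hlt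
      have h2 : y.val + d ≤ j.val := hltd hy
      have : i.val ≤ y.val := h1
      omega
  rw [reg_iff]
  intro i j hj hne
  have hroot : root R i = root R j := mem_part_toPart.mp hj
  rcases lt_or_gt_of_ne hne with h | h
  · have := key i j h hroot
    rw [Nat.dist_eq_sub_of_le (le_of_lt (show i.val < j.val from h))]
    omega
  · have := key j i h hroot.symm
    rw [Nat.dist_eq_sub_of_le_right (le_of_lt (show j.val < i.val from h))]
    omega

theorem Rof_d {d : ℕ} {P : Finpartition (univ : Finset (Fin n))} (hP : Reg d P) :
    ∀ {j i : Fin n}, Rof P j = some i → i.val + d ≤ j.val := by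
  intro j i hj
  obtain ⟨h1, h2, _⟩ := Rof_some_iff.mp hj
  have := reg_iff.mp hP j i h1 (ne_of_gt h2)
  rw [Nat.dist_eq_sub_of_le_right (le_of_lt (show i.val < j.val from h2))] at this
  have : i.val < j.val := h2
  omega


/-- The set of "arc functions" on `Fin n`: predecessor maps whose arcs have length at
least `d`, injective on defined values, with exactly `r` elements having no predecessor. -/
def ArcSet (d n r : ℕ) : Set (Fin n → Option (Fin n)) :=
  {R | (∀ {j i : Fin n}, R j = some i → i.val + d ≤ j.val) ∧
       (∀ {j₁ j₂ i : Fin n}, R j₁ = some i → R j₂ = some i → j₁ = j₂) ∧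
       (univ.filter fun x => R x = none).card = r}

/-- The set of partitions counted by `stirlingBd`. -/
def PartSet (d n r : ℕ) : Set (Finpartition (univ : Finset (Fin n))) :=
  {P | P.parts.card = r ∧ Reg d P}

theorem bijOn_toPart {d r : ℕ} (hd : 1 ≤ d) :
    Set.BijOn toPart (ArcSet d n r) (PartSet d n r) := by
  have hlt' : ∀ R ∈ ArcSet d n r, ∀ {j i : Fin n}, R j = some i → i < j := by
    intro R hR j i hj
    have := hR.1 hj
    exact Fin.lt_def.mpr (by omega)
  refine ⟨?_, ?_, ?_⟩
  · intro R hR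
    obtain ⟨h1, h2, h3⟩ := hR
    refine ⟨?_, reg_toPart h1 (hlt' R ⟨h1, h2, h3⟩) h2⟩
    rw [card_parts_toPart (hlt' R ⟨h1, h2, h3⟩)]
    exact h3
  · intro R₁ hR₁ R₂ hR₂ h
    have e₁ := Rof_toPart (hlt' R₁ hR₁) hR₁.2.1
    have e₂ := Rof_toPart (hlt' R₂ hR₂) hR₂.2.1
    have hc := congrArg Rof h
    rwa [e₁, e₂] at hc
  · intro P hP
    refine ⟨Rof P, ⟨fun {j i} h => Rof_d hP.2 h, fun {j₁ j₂ i} h h' => Rof_inj h h', ?_⟩,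
      toPart_Rof P⟩
    have hlt : ∀ {j i : Fin n}, Rof P j = some i → i < j := fun h => Rof_lt h
    have := card_parts_toPart (R := Rof P) hlt
    rw [toPart_Rof P] at this
    rw [← this]
    exact hP.1

theorem ncard_PartSet_eq_ncard_ArcSet {d r : ℕ} (hd : 1 ≤ d) :
    (PartSet d n r).ncard = (ArcSet d n r).ncard := by
  rw [← (bijOn_toPart hd).image_eq, Set.ncard_image_of_injOn (bijOn_toPart hd).injOn]

section Shift

variable {d k : ℕ} (hd : 1 ≤ d) (hdk : d ≤ k)

/-- The embedding of `Fin (k - d + 1)` in `Fin k` by adding `d - 1`. -/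
def emb (j' : Fin (k - d + 1)) : Fin k :=
  ⟨j'.val + (d - 1), by have := j'.isLt; omega⟩

/-- Shorten each arc by `d - 1`. -/
def shiftF (R : Fin k → Option (Fin k)) :
    Fin (k - d + 1) → Option (Fin (k - d + 1)) := fun j' =>
  match R (emb hd hdk j') with
  | none => none
  | some i => if h : i.val < k - d + 1 then some ⟨i.val, h⟩ else none

/-- Lengthen each arc by `d - 1`. -/
def shiftG (R' : Fin (k - d + 1) → Option (Fin (k - d + 1))) :
    Fin k → Option (Fin k) := fun j =>
  if hj : d - 1 ≤ j.val then
    match R' ⟨j.val - (d - 1), by have := j.isLt; omega⟩ with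
    | none => none
    | some i => some ⟨i.val, by have := i.isLt; omega⟩
  else none

/-- Counting lemma: if `R` vanishes below `d - 1`, the `none`s of `R` split. -/
theorem count_split (R : Fin k → Option (Fin k)) (h0 : ∀ j : Fin k, j.val < d - 1 → R j = none) :
    (univ.filter fun j => R j = none).card
      = (d - 1) + (univ.filter fun j' : Fin (k - d + 1) => R (emb hd hdk j') = none).card := by
  classical
  have hsplit := Finset.card_filter_add_card_filter_not
    (s := univ.filter fun j : Fin k => R j = none) (p := fun j => j.val < d - 1)
  have hA : ((univ.filter fun j : Fin k => R j = none).filter fun j => j.val < d - 1)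
      = (Finset.range (d - 1)).attachFin (fun m hm => by
          rw [Finset.mem_range] at hm; omega) := by
    ext j
    simp only [Finset.mem_filter, Finset.mem_univ, true_and, Finset.mem_attachFin,
      Finset.mem_range]
    constructor
    · rintro ⟨-, h⟩; exact h
    · intro h; exact ⟨h0 j h, h⟩
  have hB : ((univ.filter fun j : Fin k => R j = none).filter fun j => ¬ j.val < d - 1).card
      = (univ.filter fun j' : Fin (k - d + 1) => R (emb hd hdk j') = none).card := by
    apply Finset.card_bij (fun j hj => (⟨j.val - (d - 1), by have := j.isLt; omega⟩ :
      Fin (k - d + 1)))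
    · intro j hj
      simp only [Finset.mem_filter, Finset.mem_univ, true_and, not_lt] at hj
      simp only [Finset.mem_filter, Finset.mem_univ, true_and]
      have : emb hd hdk ⟨j.val - (d - 1), by have := j.isLt; omega⟩ = j := by
        apply Fin.ext
        simp only [emb]
        omega
      rw [this]
      exact hj.1
    · intro j₁ hj₁ j₂ hj₂ h
      simp only [Finset.mem_filter, Finset.mem_univ, true_and, not_lt] at hj₁ hj₂
      apply Fin.ext
      have := congrArg Fin.val h
      simp only at this
      omega
    · intro j' hj'
      simp only [Finset.mem_filter, Finset.mem_univ, true_and] at hj'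
      refine ⟨emb hd hdk j', ?_, ?_⟩
      · simp only [Finset.mem_filter, Finset.mem_univ, true_and, not_lt, emb]
        exact ⟨hj', by omega⟩
      · apply Fin.ext
        simp only [emb]
        omega
  rw [← hsplit, hA, hB, Finset.card_attachFin, Finset.card_range]

theorem shiftF_none_iff {R : Fin k → Option (Fin k)}
    (harc : ∀ {j i : Fin k}, R j = some i → i.val + d ≤ j.val) (j' : Fin (k - d + 1)) :
    shiftF hd hdk R j' = none ↔ R (emb hd hdk j') = none := by
  unfold shiftF
  cases hx : R (emb hd hdk j') with
  | none => simp
  | some i =>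
    have hb := harc hx
    have hj' := j'.isLt
    simp only [emb] at hb
    have hi : i.val < k - d + 1 := by omega
    simp [hi]

theorem shiftF_some_iff {R : Fin k → Option (Fin k)}
    (harc : ∀ {j i : Fin k}, R j = some i → i.val + d ≤ j.val) (j' : Fin (k - d + 1))
    (i' : Fin (k - d + 1)) :
    shiftF hd hdk R j' = some i' ↔ R (emb hd hdk j') = some ⟨i'.val, by have := i'.isLt; omega⟩ := by
  unfold shiftF
  cases hx : R (emb hd hdk j') with
  | none => simp
  | some i =>
    have hb := harc hx
    have hj' := j'.isLt
    simp only [emb] at hb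
    have hi : i.val < k - d + 1 := by omega
    simp only [hi, reduceDIte, Option.some_inj]
    constructor
    · rintro rfl; rfl
    · intro h
      have hv := congrArg Fin.val h
      exact Fin.ext (show i.val = i'.val from by simpa using hv)

end Shift


section Shift2

variable {d k r : ℕ} (hd : 1 ≤ d) (hdk : d ≤ k)

theorem shiftG_emb (R' : Fin (k - d + 1) → Option (Fin (k - d + 1))) (j' : Fin (k - d + 1)) :
    shiftG hd hdk R' (emb hd hdk j')
      = match R' j' with
        | none => none
        | some i => some (⟨i.val, by have := i.isLt; omega⟩ : Fin k) := by
  unfold shiftG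
  have hj : d - 1 ≤ (emb hd hdk j').val := by simp [emb]
  rw [dif_pos hj]
  simp only [emb, Nat.add_sub_cancel, Fin.eta]

theorem shiftF_shiftG (R' : Fin (k - d + 1) → Option (Fin (k - d + 1))) :
    shiftF hd hdk (shiftG hd hdk R') = R' := by
  funext j'
  unfold shiftF
  rw [shiftG_emb hd hdk R' j']
  cases hv : R' j' with
  | none => simp only [hv]
  | some i =>
    simp only [hv]
    have hi : i.val < k - d + 1 := i.isLt
    simp [hi]

theorem shiftG_shiftF {R : Fin k → Option (Fin k)}
    (h1 : ∀ {j i : Fin k}, R j = some i → i.val + d ≤ j.val) :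
    shiftG hd hdk (shiftF hd hdk R) = R := by
  funext j
  by_cases hj : d - 1 ≤ j.val
  · unfold shiftG
    rw [dif_pos hj]
    set j' : Fin (k - d + 1) := ⟨j.val - (d - 1), by have := j.isLt; omega⟩ with hj'
    have hemb : emb hd hdk j' = j := Fin.ext (by simp only [emb]; have : j'.val = j.val - (d - 1) := rfl; omega)
    cases hv : shiftF hd hdk R j' with
    | none =>
      simp only [hv]
      have := (shiftF_none_iff hd hdk h1 j').mp hv
      rw [hemb] at this
      exact this.symm
    | some i' =>
      simp only [hv]
      have := (shiftF_some_iff hd hdk h1 j' i').mp hv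
      rw [hemb] at this
      rw [this]
  · unfold shiftG
    rw [dif_neg hj]
    cases hRj : R j with
    | none => rfl
    | some i =>
      have := h1 hRj
      omega

theorem shiftG_some {R' : Fin (k - d + 1) → Option (Fin (k - d + 1))} {j i : Fin k}
    (h : shiftG hd hdk R' j = some i) :
    d - 1 ≤ j.val ∧ ∃ i0 : Fin (k - d + 1),
      R' ⟨j.val - (d - 1), by have := j.isLt; omega⟩ = some i0 ∧ i.val = i0.val := by
  unfold shiftG at h
  split at h
  · rename_i hj
    split at h
    · exact absurd h (by simp)
    · rename_i i0 heq
      refine ⟨hj, i0, heq, ?_⟩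
      have := Option.some.inj h
      rw [← this]
  · exact absurd h (by simp)

theorem shiftG_none_low {R' : Fin (k - d + 1) → Option (Fin (k - d + 1))} {j : Fin k}
    (hj : j.val < d - 1) : shiftG hd hdk R' j = none := by
  unfold shiftG
  rw [dif_neg (by omega)]

theorem mapsTo_shiftG (hrd : d - 1 ≤ r) {R' : Fin (k - d + 1) → Option (Fin (k - d + 1))}
    (hR' : R' ∈ ArcSet 1 (k - d + 1) (r - (d - 1))) : shiftG hd hdk R' ∈ ArcSet d k r := by
  obtain ⟨h1, h2, h3⟩ := hR'
  refine ⟨?_, ?_, ?_⟩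
  · intro j i h
    obtain ⟨hj, i0, heq, hval⟩ := shiftG_some hd hdk h
    have := h1 heq
    simp only at this
    omega
  · intro j₁ j₂ i h h'
    obtain ⟨hj₁, i0₁, heq₁, hval₁⟩ := shiftG_some hd hdk h
    obtain ⟨hj₂, i0₂, heq₂, hval₂⟩ := shiftG_some hd hdk h'
    have hi0 : i0₁ = i0₂ := Fin.ext (by omega)
    rw [hi0] at heq₁
    have := h2 heq₁ heq₂
    have hval := congrArg Fin.val this
    simp only at hval
    apply Fin.ext
    omega
  · have h0 : ∀ j : Fin k, j.val < d - 1 → shiftG hd hdk R' j = none :=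
      fun j hj => shiftG_none_low hd hdk hj
    rw [count_split hd hdk _ h0]
    have he : (univ.filter fun j' : Fin (k - d + 1) =>
        shiftG hd hdk R' (emb hd hdk j') = none)
        = univ.filter fun j' => R' j' = none := by
      apply Finset.filter_congr
      intro j' _
      rw [shiftG_emb hd hdk R' j']
      cases hv : R' j' with
      | none => exact iff_of_true rfl rfl
      | some i => exact iff_of_false (by simp) (by simp)
    rw [he, h3]
    omega

theorem mapsTo_shiftF {R : Fin k → Option (Fin k)} (hR : R ∈ ArcSet d k r) :
    shiftF hd hdk R ∈ ArcSet 1 (k - d + 1) (r - (d - 1)) := by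
  obtain ⟨h1, h2, h3⟩ := hR
  refine ⟨?_, ?_, ?_⟩
  · intro j' i' h
    rw [shiftF_some_iff hd hdk h1] at h
    have := h1 h
    simp only [emb] at this
    omega
  · intro j'₁ j'₂ i' h h'
    rw [shiftF_some_iff hd hdk h1] at h h'
    have := h2 h h'
    have hval := congrArg Fin.val this
    simp only [emb] at hval
    exact Fin.ext (by omega)
  · have h0 : ∀ j : Fin k, j.val < d - 1 → R j = none := by
      intro j hj
      cases hRj : R j with
      | none => rfl
      | some i => have := h1 hRj; omega
    have hsplit := count_split hd hdk R h0
    rw [h3] at hsplit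
    have he : (univ.filter fun j' : Fin (k - d + 1) => shiftF hd hdk R j' = none)
        = univ.filter fun j' => R (emb hd hdk j') = none := by
      apply Finset.filter_congr
      intro j' _
      exact shiftF_none_iff hd hdk h1 j'
    rw [he]
    omega

include hd hdk in
theorem ncard_ArcSet_shift (hrd : d - 1 ≤ r) :
    (ArcSet d k r).ncard = (ArcSet 1 (k - d + 1) (r - (d - 1))).ncard := by
  have hinv : Set.InvOn (shiftG hd hdk) (shiftF hd hdk) (ArcSet d k r)
      (ArcSet 1 (k - d + 1) (r - (d - 1))) :=
    ⟨fun R hR => shiftG_shiftF hd hdk hR.1, fun R' _ => shiftF_shiftG hd hdk R'⟩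
  have hbij := hinv.bijOn (fun R hR => mapsTo_shiftF hd hdk hR)
    (fun R' hR' => mapsTo_shiftG hd hdk hrd hR')
  rw [← hbij.image_eq, Set.ncard_image_of_injOn hbij.injOn]

end Shift2

end RS

theorem stirlingBd_eq_ncard_PartSet (d k r : ℕ) :
    stirlingBd d k r = (RS.PartSet d k r).ncard := rfl

theorem stirlingB_eq (m s : ℕ) : stirlingB m s = stirlingBd 1 m s := by
  unfold stirlingB stirlingBd
  congr 1
  ext P
  simp only [Set.mem_setOf_eq]
  constructor
  · intro h
    refine ⟨h, fun b _ i _ j _ hij => ?_⟩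
    have hne : i.val ≠ j.val := fun hv => hij (Fin.ext hv)
    have := Nat.dist_pos_of_ne hne
    omega
  · exact fun h => h.1

theorem reduced_stirling (d k r : ℕ) (hd : 1 ≤ d) (hr : d ≤ r) (hk : r ≤ k) :
    stirlingBd d k r = stirlingB (k - d + 1) (r - d + 1) := by
  have hdk : d ≤ k := le_trans hr hk
  have h1 : stirlingBd d k r = (RS.ArcSet d k r).ncard := by
    rw [stirlingBd_eq_ncard_PartSet, RS.ncard_PartSet_eq_ncard_ArcSet hd]
  have h2 : stirlingB (k - d + 1) (r - d + 1) = (RS.ArcSet 1 (k - d + 1) (r - d + 1)).ncard := by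
    rw [stirlingB_eq, stirlingBd_eq_ncard_PartSet, RS.ncard_PartSet_eq_ncard_ArcSet (le_refl 1)]
  have hsub : r - (d - 1) = r - d + 1 := by omega
  rw [h1, h2, RS.ncard_ArcSet_shift hd hdk (by omega), hsub]
end

section
/- Let D(k,r) be the number of partitions of {1,...,k} into r nonempty blocks such that elements in the same block have pairwise distance at least 2 and the elements 1 and k lie in the same block. Then D(k,r) = Σ_{j=1}^{k-r} (-1)^{j+1} B^2(k-j, r), where B^2(m,r) counts the distance-at-least-2 partitions of {1,...,m} into r blocks. -/
/-- `B²(m,r)`: the number of partitions of `{1,…,m}` into `r` nonempty blocks such that any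
two distinct elements of the same block differ by at least 2. -/
noncomputable def stirlingB2dist (m r : ℕ) : ℕ :=
  {P : Finpartition (Finset.univ : Finset (Fin m)) |
    P.parts.card = r ∧
    ∀ b ∈ P.parts, ∀ i ∈ b, ∀ j ∈ b, i ≠ j → 2 ≤ Nat.dist i.val j.val}.ncard

/-- `D(k,r)`: as in `stirlingB2dist k r`, but additionally requiring that the elements `1`
and `k` (here `⟨0,_⟩` and `⟨k-1,_⟩` of `Fin k`) lie in the same block. -/
noncomputable def Dcount (k r : ℕ) (hk : 0 < k) : ℕ :=
  {P : Finpartition (Finset.univ : Finset (Fin k)) |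
    P.parts.card = r ∧
    (∀ b ∈ P.parts, ∀ i ∈ b, ∀ j ∈ b, i ≠ j → 2 ≤ Nat.dist i.val j.val) ∧
    ∃ b ∈ P.parts, (⟨0, hk⟩ : Fin k) ∈ b ∧ (⟨k - 1, Nat.sub_lt hk one_pos⟩ : Fin k) ∈ b}.ncard


open Finset

variable {k : ℕ}

instance finpartFinite (m : ℕ) : Finite (Finpartition (Finset.univ : Finset (Fin m))) :=
  Finite.of_injective Finpartition.parts fun _ _ h => Finpartition.ext h

/-- preimage of a block under castSucc -/
noncomputable def prei (b : Finset (Fin (k+1))) : Finset (Fin k) :=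
  b.preimage Fin.castSucc (Fin.castSucc_injective k).injOn

lemma mem_prei {b : Finset (Fin (k+1))} {x : Fin k} : x ∈ prei b ↔ x.castSucc ∈ b :=
  Finset.mem_preimage

/-- forward map: delete the top element -/
noncomputable def Fmap (P : Finpartition (Finset.univ : Finset (Fin (k+1)))) :
    Finpartition (Finset.univ : Finset (Fin k)) :=
  Finpartition.ofErase (P.parts.image prei)
    (by
      rw [Finset.supIndep_iff_pairwiseDisjoint]
      rintro b1 h1 b2 h2 hne
      simp only [Finset.coe_image, Set.mem_image, Finset.mem_coe] at h1 h2
      obtain ⟨c1, hc1, rfl⟩ := h1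
      obtain ⟨c2, hc2, rfl⟩ := h2
      simp only [id, Finset.disjoint_left]
      intro x hx1 hx2
      rw [mem_prei] at hx1 hx2
      exact hne (by rw [P.eq_of_mem_parts hc1 hc2 hx1 hx2]))
    (by
      apply Finset.Subset.antisymm (Finset.subset_univ _)
      intro x _
      rw [Finset.mem_sup]
      obtain ⟨b, hb, hxb⟩ := P.exists_mem (Finset.mem_univ x.castSucc)
      exact ⟨prei b, Finset.mem_image_of_mem _ hb, mem_prei.2 hxb⟩)

/-- the block-map for the inverse: add the top element to the block of 0 -/
def gfun (hk : 0 < k) (b : Finset (Fin k)) : Finset (Fin (k+1)) :=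
  if (⟨0, hk⟩ : Fin k) ∈ b then insert (Fin.last k) (b.map Fin.castSuccEmb)
  else b.map Fin.castSuccEmb

lemma mem_map_castSucc {b : Finset (Fin k)} {y : Fin k} :
    y.castSucc ∈ b.map Fin.castSuccEmb ↔ y ∈ b :=
  Finset.mem_map' _

lemma last_not_mem_map {b : Finset (Fin k)} :
    Fin.last k ∉ b.map Fin.castSuccEmb := by
  simp only [Finset.mem_map, not_exists, not_and]
  intro y _ hy
  exact (Fin.castSucc_lt_last y).ne hy

lemma castSucc_mem_gfun {hk : 0 < k} {b : Finset (Fin k)} {y : Fin k} :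
    y.castSucc ∈ gfun hk b ↔ y ∈ b := by
  unfold gfun
  split
  · rw [Finset.mem_insert, mem_map_castSucc]
    simp [(Fin.castSucc_lt_last y).ne]
  · exact mem_map_castSucc

lemma last_mem_gfun {hk : 0 < k} {b : Finset (Fin k)} :
    Fin.last k ∈ gfun hk b ↔ (⟨0, hk⟩ : Fin k) ∈ b := by
  unfold gfun
  split <;> rename_i h
  · simp [h]
  · exact iff_of_false last_not_mem_map h

lemma prei_gfun {hk : 0 < k} (b : Finset (Fin k)) : prei (gfun hk b) = b := by
  ext x
  rw [mem_prei, castSucc_mem_gfun]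

lemma gfun_nonempty {hk : 0 < k} {b : Finset (Fin k)} (hb : b.Nonempty) :
    (gfun hk b).Nonempty := by
  obtain ⟨y, hy⟩ := hb
  exact ⟨y.castSucc, castSucc_mem_gfun.2 hy⟩

/-- inverse map -/
noncomputable def Gmap (hk : 0 < k) (Q : Finpartition (Finset.univ : Finset (Fin k))) :
    Finpartition (Finset.univ : Finset (Fin (k+1))) :=
  Finpartition.ofErase (Q.parts.image (gfun hk))
    (by
      rw [Finset.supIndep_iff_pairwiseDisjoint]
      rintro b1 h1 b2 h2 hne
      simp only [Finset.coe_image, Set.mem_image, Finset.mem_coe] at h1 h2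
      obtain ⟨c1, hc1, rfl⟩ := h1
      obtain ⟨c2, hc2, rfl⟩ := h2
      have hcc : c1 ≠ c2 := by rintro rfl; exact hne rfl
      simp only [id, Finset.disjoint_left]
      intro x hx1 hx2
      rcases eq_or_ne x (Fin.last k) with rfl | hxl
      · rw [last_mem_gfun] at hx1 hx2
        exact hcc (Q.eq_of_mem_parts hc1 hc2 hx1 hx2)
      · obtain ⟨y, rfl⟩ := Fin.exists_castSucc_eq.2 hxl
        rw [castSucc_mem_gfun] at hx1 hx2
        exact hcc (Q.eq_of_mem_parts hc1 hc2 hx1 hx2))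
    (by
      apply Finset.Subset.antisymm (Finset.subset_univ _)
      intro x _
      rw [Finset.mem_sup]
      rcases eq_or_ne x (Fin.last k) with rfl | hxl
      · obtain ⟨b, hb, hxb⟩ := Q.exists_mem (Finset.mem_univ (⟨0, hk⟩ : Fin k))
        exact ⟨gfun hk b, Finset.mem_image_of_mem _ hb, last_mem_gfun.2 hxb⟩
      · obtain ⟨y, rfl⟩ := Fin.exists_castSucc_eq.2 hxl
        obtain ⟨b, hb, hxb⟩ := Q.exists_mem (Finset.mem_univ y)
        exact ⟨gfun hk b, Finset.mem_image_of_mem _ hb, castSucc_mem_gfun.2 hxb⟩)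

lemma Gmap_parts (hk : 0 < k) (Q : Finpartition (Finset.univ : Finset (Fin k))) :
    (Gmap hk Q).parts = Q.parts.image (gfun hk) := by
  show (Q.parts.image (gfun hk)).erase ⊥ = _
  apply Finset.erase_eq_of_notMem
  simp only [Finset.mem_image, not_exists]
  rintro b ⟨hb, h⟩
  exact (Q.nonempty_of_mem_parts hb).elim fun y hy =>
    (Finset.eq_empty_iff_forall_notMem.1 h) y.castSucc (castSucc_mem_gfun.2 hy)


def distOK {m : ℕ} (P : Finpartition (Finset.univ : Finset (Fin m))) : Prop :=
  ∀ b ∈ P.parts, ∀ i ∈ b, ∀ j ∈ b, i ≠ j → 2 ≤ Nat.dist i.val j.val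

def together {m : ℕ} (h : 0 < m) (P : Finpartition (Finset.univ : Finset (Fin m))) : Prop :=
  ∃ b ∈ P.parts, (⟨0, h⟩ : Fin m) ∈ b ∧ (⟨m - 1, Nat.sub_lt h one_pos⟩ : Fin m) ∈ b

lemma stirling_eq (m r : ℕ) :
    stirlingB2dist m r
      = {P : Finpartition (Finset.univ : Finset (Fin m)) | P.parts.card = r ∧ distOK P}.ncard :=
  rfl

lemma Dcount_eq' (m r : ℕ) (h : 0 < m) :
    Dcount m r h
      = {P : Finpartition (Finset.univ : Finset (Fin m)) |
          P.parts.card = r ∧ distOK P ∧ together h P}.ncard :=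
  rfl

section Bij

variable {k : ℕ}

lemma top_eq (h2 : 0 < k + 1) : (⟨(k+1) - 1, Nat.sub_lt h2 one_pos⟩ : Fin (k+1)) = Fin.last k := rfl

lemma zero_castSucc (hk : 0 < k) (h2 : 0 < k + 1) : (⟨0, hk⟩ : Fin k).castSucc = (⟨0, h2⟩ : Fin (k+1)) := rfl

variable {P : Finpartition (Finset.univ : Finset (Fin (k+1)))}

lemma top_mem_of_together (h2 : 0 < k + 1) (hP : together h2 P) {b : Finset (Fin (k+1))}
    (hb : b ∈ P.parts) (hzb : (⟨0, h2⟩ : Fin (k+1)) ∈ b) : Fin.last k ∈ b := by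
  obtain ⟨c, hc, hzc, hlc⟩ := hP
  rw [top_eq h2] at hlc
  rwa [P.eq_of_mem_parts hb hc hzb hzc]

lemma zero_mem_of_together (h2 : 0 < k + 1) (hP : together h2 P) {b : Finset (Fin (k+1))}
    (hb : b ∈ P.parts) (hlb : Fin.last k ∈ b) : (⟨0, h2⟩ : Fin (k+1)) ∈ b := by
  obtain ⟨c, hc, hzc, hlc⟩ := hP
  rw [top_eq h2] at hlc
  rwa [P.eq_of_mem_parts hb hc hlb hlc]

lemma prei_nonempty (hk : 0 < k) (h2 : 0 < k + 1) (hP : together h2 P) {b : Finset (Fin (k+1))}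
    (hb : b ∈ P.parts) : (prei b).Nonempty := by
  obtain ⟨x, hx⟩ := P.nonempty_of_mem_parts hb
  rcases eq_or_ne x (Fin.last k) with rfl | hne
  · exact ⟨⟨0, hk⟩, mem_prei.2 (zero_castSucc hk h2 ▸ zero_mem_of_together h2 hP hb hx)⟩
  · obtain ⟨y, rfl⟩ := Fin.exists_castSucc_eq.2 hne
    exact ⟨y, mem_prei.2 hx⟩

lemma Fmap_parts (hk : 0 < k) (h2 : 0 < k + 1) (hP : together h2 P) :
    (Fmap P).parts = P.parts.image prei := by
  show (P.parts.image prei).erase ⊥ = _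
  apply Finset.erase_eq_of_notMem
  simp only [Finset.mem_image, not_exists]
  rintro b ⟨hb, hbot⟩
  exact absurd hbot (prei_nonempty hk h2 hP hb).ne_empty

lemma prei_injOn : Set.InjOn prei (P.parts : Set (Finset (Fin (k+1)))) := by
  intro b1 hb1 b2 hb2 h
  obtain ⟨x, hx⟩ := P.nonempty_of_mem_parts hb1
  rcases eq_or_ne x (Fin.last k) with rfl | hne
  · obtain ⟨x2, hx2⟩ := P.nonempty_of_mem_parts hb2
    rcases eq_or_ne x2 (Fin.last k) with rfl | hne2
    · exact P.eq_of_mem_parts hb1 hb2 hx hx2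
    · obtain ⟨y, rfl⟩ := Fin.exists_castSucc_eq.2 hne2
      have : y ∈ prei b1 := h ▸ mem_prei.2 hx2
      exact P.eq_of_mem_parts hb1 hb2 (mem_prei.1 this) hx2
  · obtain ⟨y, rfl⟩ := Fin.exists_castSucc_eq.2 hne
    have : y ∈ prei b2 := h ▸ mem_prei.2 hx
    exact P.eq_of_mem_parts hb1 hb2 hx (mem_prei.1 this)

lemma Fmap_good (hk : 0 < k) (h2 : 0 < k + 1) {r : ℕ} (hcard : P.parts.card = r) (hdist : distOK P)
    (hP : together h2 P) :
    (Fmap P).parts.card = r ∧ distOK (Fmap P) ∧ ¬ together hk (Fmap P) := by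
  have hparts := Fmap_parts hk h2 hP
  refine ⟨?_, ?_, ?_⟩
  · rw [hparts, Finset.card_image_of_injOn (prei_injOn), hcard]
  · intro b' hb' i hi j hj hij
    rw [hparts, Finset.mem_image] at hb'
    obtain ⟨b, hb, rfl⟩ := hb'
    have := hdist b hb i.castSucc (mem_prei.1 hi) j.castSucc (mem_prei.1 hj)
      (fun h => hij (Fin.castSucc_injective k h))
    simpa using this
  · rintro ⟨b', hb', hzb', hwb'⟩
    rw [hparts, Finset.mem_image] at hb'
    obtain ⟨b, hb, rfl⟩ := hb'
    have hz : (⟨0, h2⟩ : Fin (k+1)) ∈ b := zero_castSucc hk h2 ▸ mem_prei.1 hzb'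
    have hl : Fin.last k ∈ b := top_mem_of_together h2 hP hb hz
    have hw : (⟨k - 1, Nat.sub_lt hk one_pos⟩ : Fin k).castSucc ∈ b := mem_prei.1 hwb'
    have hne : (⟨k - 1, Nat.sub_lt hk one_pos⟩ : Fin k).castSucc ≠ Fin.last k := by
      intro h
      have := congrArg Fin.val h
      simp only [Fin.coe_castSucc, Fin.val_last] at this
      omega
    have := hdist b hb _ hw _ hl hne
    simp only [Fin.coe_castSucc, Fin.val_last, Nat.dist] at this
    omega

variable {Q : Finpartition (Finset.univ : Finset (Fin k))}

lemma mem_gfun_iff (hk : 0 < k) {b : Finset (Fin k)} {x : Fin (k+1)} :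
    x ∈ gfun hk b ↔ (x = Fin.last k ∧ (⟨0, hk⟩ : Fin k) ∈ b) ∨ ∃ y ∈ b, y.castSucc = x := by
  rcases eq_or_ne x (Fin.last k) with rfl | hne
  · rw [last_mem_gfun]
    constructor
    · intro h; exact Or.inl ⟨rfl, h⟩
    · rintro (⟨-, h⟩ | ⟨y, hy, h⟩)
      · exact h
      · exact absurd h (Fin.castSucc_lt_last y).ne
  · obtain ⟨y, rfl⟩ := Fin.exists_castSucc_eq.2 hne
    rw [castSucc_mem_gfun]
    constructor
    · intro h; exact Or.inr ⟨y, h, rfl⟩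
    · rintro (⟨h, -⟩ | ⟨y', hy', h⟩)
      · exact absurd h hne
      · rwa [← Fin.castSucc_injective k h]

lemma gfun_injOn (hk : 0 < k) : Set.InjOn (gfun hk) (Q.parts : Set (Finset (Fin k))) := by
  intro b1 _ b2 _ h
  rw [← prei_gfun (hk := hk) b1, ← prei_gfun (hk := hk) b2, h]

lemma Gmap_good (hk : 0 < k) (h2 : 0 < k + 1) {r : ℕ} (hk2 : 2 ≤ k) (hcard : Q.parts.card = r) (hdist : distOK Q)
    (hQ : ¬ together hk Q) :
    (Gmap hk Q).parts.card = r ∧ distOK (Gmap hk Q) ∧ together h2 (Gmap hk Q) := by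
  have hparts := Gmap_parts hk Q
  refine ⟨?_, ?_, ?_⟩
  · rw [hparts, Finset.card_image_of_injOn (gfun_injOn hk), hcard]
  · intro b' hb' i hi j hj hij
    rw [hparts, Finset.mem_image] at hb'
    obtain ⟨b, hb, rfl⟩ := hb'
    rw [mem_gfun_iff hk] at hi hj
    -- helper: an element of the block of 0 other than the top has value ≤ k - 2
    have hsmall : ∀ y : Fin k, y ∈ b → (⟨0, hk⟩ : Fin k) ∈ b → (y : ℕ) ≤ k - 2 := by
      intro y hy hz
      have hwne : y ≠ ⟨k - 1, Nat.sub_lt hk one_pos⟩ := by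
        rintro rfl
        exact hQ ⟨b, hb, hz, hy⟩
      have : (y : ℕ) ≠ k - 1 := fun h => hwne (Fin.ext h)
      have := y.isLt
      omega
    rcases hi with ⟨rfl, hzb⟩ | ⟨y, hy, rfl⟩
    · rcases hj with ⟨rfl, -⟩ | ⟨y', hy', rfl⟩
      · exact absurd rfl hij
      · have := hsmall y' hy' hzb
        simp only [Fin.val_last, Fin.coe_castSucc, Nat.dist]
        omega
    · rcases hj with ⟨rfl, hzb⟩ | ⟨y', hy', rfl⟩
      · have := hsmall y hy hzb
        simp only [Fin.val_last, Fin.coe_castSucc, Nat.dist]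
        omega
      · have := hdist b hb y hy y' hy' (fun h => hij (by rw [h]))
        simpa using this
  · obtain ⟨b, hb, hzb⟩ := Q.exists_mem (Finset.mem_univ (⟨0, hk⟩ : Fin k))
    refine ⟨gfun hk b, ?_, ?_, ?_⟩
    · rw [hparts]; exact Finset.mem_image_of_mem _ hb
    · rw [← zero_castSucc hk h2]
      exact castSucc_mem_gfun.2 hzb
    · rw [top_eq h2]
      exact last_mem_gfun.2 hzb

lemma Fmap_Gmap (hk : 0 < k) : Fmap (Gmap hk Q) = Q := by
  apply Finpartition.ext
  show ((Gmap hk Q).parts.image prei).erase ⊥ = Q.parts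
  rw [Gmap_parts, Finset.image_image]
  have h : Q.parts.image (prei ∘ gfun hk) = Q.parts :=
    (Finset.image_congr (g := id) (fun b _ => prei_gfun b)).trans Finset.image_id
  rw [h]
  exact Finset.erase_eq_of_notMem Q.bot_notMem

lemma gfun_prei (hk : 0 < k) (h2 : 0 < k + 1) (hP : together h2 P) {b : Finset (Fin (k+1))} (hb : b ∈ P.parts) :
    gfun hk (prei b) = b := by
  ext x
  rw [mem_gfun_iff hk]
  constructor
  · rintro (⟨rfl, hz⟩ | ⟨y, hy, rfl⟩)
    · exact top_mem_of_together h2 hP hb (zero_castSucc hk h2 ▸ mem_prei.1 hz)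
    · exact mem_prei.1 hy
  · intro hx
    rcases eq_or_ne x (Fin.last k) with rfl | hne
    · refine Or.inl ⟨rfl, mem_prei.2 ?_⟩
      rw [zero_castSucc hk h2]
      exact zero_mem_of_together h2 hP hb hx
    · obtain ⟨y, rfl⟩ := Fin.exists_castSucc_eq.2 hne
      exact Or.inr ⟨y, mem_prei.2 hx, rfl⟩

lemma Gmap_Fmap (hk : 0 < k) (h2 : 0 < k + 1) (hP : together h2 P) : Gmap hk (Fmap P) = P := by
  apply Finpartition.ext
  rw [Gmap_parts, Fmap_parts hk h2 hP, Finset.image_image]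
  exact (Finset.image_congr (g := id) (fun b hb => gfun_prei hk h2 hP hb)).trans
    Finset.image_id

end Bij

lemma split_count (k r : ℕ) (hk2 : 2 ≤ k) (h1 : 0 < k) (h2 : 0 < k + 1) :
    stirlingB2dist k r = Dcount k r h1 + Dcount (k+1) r h2 := by
  classical
  set S : Set (Finpartition (Finset.univ : Finset (Fin k))) :=
    {P | P.parts.card = r ∧ distOK P} with hS
  set A : Set (Finpartition (Finset.univ : Finset (Fin k))) :=
    {P | P.parts.card = r ∧ distOK P ∧ together h1 P} with hA
  set B : Set (Finpartition (Finset.univ : Finset (Fin k))) :=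
    {P | (P.parts.card = r ∧ distOK P) ∧ ¬ together h1 P} with hB
  set T : Set (Finpartition (Finset.univ : Finset (Fin (k+1)))) :=
    {P | P.parts.card = r ∧ distOK P ∧ together h2 P} with hT
  have hSAB : S = A ∪ B := by
    ext P
    simp only [hS, hA, hB, Set.mem_setOf_eq, Set.mem_union]
    by_cases h : together h1 P <;> tauto
  have hdisj : Disjoint A B := by
    rw [Set.disjoint_left]
    rintro P ⟨-, -, h⟩ ⟨-, h'⟩
    exact h' h
  have hcardS : S.ncard = A.ncard + B.ncard := by
    rw [hSAB, Set.ncard_union_eq hdisj (Set.toFinite _) (Set.toFinite _)]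
  -- bijection between T and B via Fmap
  have himg : Fmap '' T = B := by
    ext Q
    constructor
    · rintro ⟨P, ⟨hc, hd, ht⟩, rfl⟩
      obtain ⟨h1', h2', h3'⟩ := Fmap_good h1 h2 hc hd ht
      exact ⟨⟨h1', h2'⟩, h3'⟩
    · rintro ⟨⟨hc, hd⟩, hnt⟩
      obtain ⟨h1', h2', h3'⟩ := Gmap_good h1 h2 hk2 hc hd hnt
      exact ⟨Gmap h1 Q, ⟨h1', h2', h3'⟩, Fmap_Gmap h1⟩
  have hinj : Set.InjOn Fmap T := by
    rintro P1 ⟨-, -, ht1⟩ P2 ⟨-, -, ht2⟩ h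
    rw [← Gmap_Fmap h1 h2 ht1, ← Gmap_Fmap h1 h2 ht2, h]
  have hTB : T.ncard = B.ncard := by
    rw [← himg, Set.ncard_image_of_injOn hinj]
  show S.ncard = A.ncard + T.ncard
  rw [hcardS, hTB]

lemma Dcount_diag (r : ℕ) (hr : 2 ≤ r) (h0 : 0 < r) : Dcount r r h0 = 0 := by
  rw [Dcount_eq']
  have hemp : {P : Finpartition (Finset.univ : Finset (Fin r)) |
      P.parts.card = r ∧ distOK P ∧ together h0 P} = ∅ := by
    rw [Set.eq_empty_iff_forall_notMem]
    rintro P ⟨hcard, -, b, hb, hzb, hwb⟩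
    have hsum : ∑ c ∈ P.parts, c.card = r := by
      rw [P.sum_card_parts, Finset.card_univ, Fintype.card_fin]
    have hzw : (⟨0, h0⟩ : Fin r) ≠ ⟨r - 1, Nat.sub_lt h0 one_pos⟩ := by
      intro h
      have := congrArg Fin.val h
      simp only at this
      omega
    have hb2 : 2 ≤ b.card := Finset.one_lt_card.2 ⟨_, hzb, _, hwb, hzw⟩
    have hrest : ∀ c ∈ P.parts.erase b, 1 ≤ c.card := fun c hc =>
      Finset.card_pos.2 (P.nonempty_of_mem_parts (Finset.mem_of_mem_erase hc))
    have h1 : (P.parts.erase b).card = r - 1 := by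
      rw [Finset.card_erase_of_mem hb, hcard]
    have h2 : ∑ c ∈ P.parts.erase b, c.card + b.card = r := by
      rwa [Finset.sum_erase_add _ _ hb]
    have h3 : (P.parts.erase b).card • 1 ≤ ∑ c ∈ P.parts.erase b, c.card :=
      Finset.card_nsmul_le_sum _ _ _ hrest
    simp only [smul_eq_mul, mul_one] at h3
    omega
  rw [hemp, Set.ncard_empty]

lemma sum_Icc_shift (n : ℕ) (f : ℕ → ℤ) :
    ∑ j ∈ Finset.Icc 1 (n + 1), f j = f 1 + ∑ j ∈ Finset.Icc 1 n, f (j + 1) := by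
  induction n with
  | zero => simp
  | succ n ih =>
    rw [Finset.sum_Icc_succ_top (by omega) f, ih,
      Finset.sum_Icc_succ_top (by omega) (fun j => f (j + 1)), add_assoc]

lemma Dcount_aux (r : ℕ) (hr : 2 ≤ r) (d : ℕ) (h0 : 0 < r + d) :
    (Dcount (r + d) r h0 : ℤ)
      = ∑ j ∈ Finset.Icc 1 d, (-1 : ℤ) ^ (j + 1) * (stirlingB2dist (r + d - j) r : ℤ) := by
  induction d with
  | zero =>
    simp only [Finset.Icc_eq_empty_of_lt (by omega : (0:ℕ) < 1), Finset.sum_empty]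
    have h : Dcount (r + 0) r h0 = 0 := Dcount_diag r hr h0
    rw [h]
    simp
  | succ d ih =>
    have h1 : 0 < r + d := by omega
    have key := split_count (r + d) r (by omega) h1 (by omega)
    have ihd := ih h1
    have hcast : (Dcount (r + (d+1)) r h0 : ℤ)
        = (stirlingB2dist (r + d) r : ℤ) - (Dcount (r + d) r h1 : ℤ) := by
      have : Dcount (r + (d+1)) r h0 = Dcount ((r + d) + 1) r (by omega) := rfl
      rw [this]
      push_cast [key]
      ring
    rw [hcast, ihd, sum_Icc_shift d
      (fun j => (-1 : ℤ) ^ (j + 1) * (stirlingB2dist (r + (d+1) - j) r : ℤ))]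
    have h1' : (-1 : ℤ) ^ (1 + 1) * (stirlingB2dist (r + (d+1) - 1) r : ℤ)
        = (stirlingB2dist (r + d) r : ℤ) := by
      norm_num [show r + (d+1) - 1 = r + d from by omega]
    rw [h1']
    have hcongr : ∑ j ∈ Finset.Icc 1 d,
          (-1 : ℤ) ^ (j + 1 + 1) * (stirlingB2dist (r + (d+1) - (j+1)) r : ℤ)
        = ∑ j ∈ Finset.Icc 1 d,
          -((-1 : ℤ) ^ (j + 1) * (stirlingB2dist (r + d - j) r : ℤ)) := by
      apply Finset.sum_congr rfl
      intro j hj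
      rw [Finset.mem_Icc] at hj
      rw [show r + (d+1) - (j+1) = r + d - j from by omega, pow_succ]
      ring
    rw [hcongr, Finset.sum_neg_distrib]
    ring

theorem Dcount_eq (k r : ℕ) (hr : 2 ≤ r) (hk : r ≤ k) :
    (Dcount k r (lt_of_lt_of_le (by omega) hk) : ℤ)
      = ∑ j ∈ Finset.Icc 1 (k - r), (-1 : ℤ) ^ (j + 1) * (stirlingB2dist (k - j) r : ℤ) := by
  obtain ⟨d, rfl⟩ : ∃ d, k = r + d := ⟨k - r, by omega⟩
  rw [show r + d - r = d from by omega]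
  exact Dcount_aux r hr d (by omega)
end

section
/- For a bipartite multigraph Δ(I,T) associated to paths I (of length k, with vertices among {1,...,p}) and T (of length k, with vertices among {1,...,n}), if every edge of Δ(I,T) has multiplicity at least 2, then the number of distinct values in T satisfies #{T} ≤ k - r + 1, where r is the number of distinct values in I. -/
/-- For a walk (list of edges where consecutive edges share a coordinate),
the number of distinct endpoints is at most the number of distinct edges plus 1. -/
lemma chain_card (L : List (ℕ × ℕ)) (hne : L ≠ [])
    (hc : L.Chain' (fun a b => a.1 = b.1 ∨ a.2 = b.2)) :
    (L.map Prod.fst).toFinset.card + (L.map Prod.snd).toFinset.card ≤ L.toFinset.card + 1 := by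
  induction L with
  | nil => simp at hne
  | cons a l ih =>
    cases l with
    | nil => simp
    | cons b t =>
      obtain ⟨hab, hc2⟩ := List.isChain_cons_cons.mp hc
      have IH := ih (by simp) hc2
      have e1 : ((a::b::t).map Prod.fst).toFinset = insert a.1 (((b::t).map Prod.fst).toFinset) := by
        simp [List.toFinset_cons]
      have e2 : ((a::b::t).map Prod.snd).toFinset = insert a.2 (((b::t).map Prod.snd).toFinset) := by
        simp [List.toFinset_cons]
      have e3 : (a::b::t).toFinset = insert a ((b::t).toFinset) := by
        simp [List.toFinset_cons]
      rw [e1, e2, e3]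
      by_cases hmem : a ∈ (b :: t)
      · have h1 : a.1 ∈ ((b::t).map Prod.fst).toFinset := by
          simp only [List.mem_toFinset]; exact List.mem_map_of_mem hmem
        have h2 : a.2 ∈ ((b::t).map Prod.snd).toFinset := by
          simp only [List.mem_toFinset]; exact List.mem_map_of_mem hmem
        have h3 : a ∈ (b::t).toFinset := List.mem_toFinset.mpr hmem
        rw [Finset.insert_eq_self.mpr h1, Finset.insert_eq_self.mpr h2,
            Finset.insert_eq_self.mpr h3]
        exact IH
      · have h3 : (insert a (b::t).toFinset).card = (b::t).toFinset.card + 1 :=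
          Finset.card_insert_of_notMem (by simpa using hmem)
        rw [h3]
        rcases hab with h | h
        · have h1 : a.1 ∈ ((b::t).map Prod.fst).toFinset := by
            simp only [List.mem_toFinset]
            exact h ▸ List.mem_map_of_mem (List.mem_cons_self (a := b) (l := t))
          rw [Finset.insert_eq_self.mpr h1]
          have := Finset.card_insert_le a.2 ((b::t).map Prod.snd).toFinset
          omega
        · have h2 : a.2 ∈ ((b::t).map Prod.snd).toFinset := by
            simp only [List.mem_toFinset]
            exact h ▸ List.mem_map_of_mem (List.mem_cons_self (a := b) (l := t))
          rw [Finset.insert_eq_self.mpr h2]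
          have := Finset.card_insert_le a.1 ((b::t).map Prod.fst).toFinset
          omega


/-- If every edge of the bipartite multigraph `Δ(I,T)` (with edges `(i_ℓ, t_ℓ)` and
`(i_{ℓ+1}, t_ℓ)` for `ℓ = 1,…,k`, cyclically) has multiplicity at least 2, then the number
of distinct values of `T` is at most `k - r + 1`, where `r` is the number of distinct
values of `I`. -/
theorem card_T_le (k : ℕ) (hk : 0 < k) (I T : Fin k → ℕ)
    (E : Multiset (ℕ × ℕ))
    (hE : E = (Finset.univ.val.map fun ℓ : Fin k => (I ℓ, T ℓ)) +
              (Finset.univ.val.map fun ℓ : Fin k =>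
                (I ⟨(ℓ.val + 1) % k, Nat.mod_lt _ hk⟩, T ℓ)))
    (hmult : ∀ e ∈ E, 2 ≤ E.count e) :
    (Finset.image T Finset.univ).card ≤ k - (Finset.image I Finset.univ).card + 1 := by
  -- the walk
  set g : Fin (2*k) → ℕ × ℕ := fun m =>
    (if m.val % 2 = 0 then I ⟨m.val/2, by omega⟩
     else I ⟨(m.val/2 + 1) % k, Nat.mod_lt _ hk⟩, T ⟨m.val/2, by omega⟩) with hg
  set L : List (ℕ × ℕ) := List.ofFn g with hL
  have hlen : L.length = 2*k := by simp [hL]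
  have hne : L ≠ [] := by
    intro h
    rw [h] at hlen
    simp at hlen; omega
  -- chain property
  have hchain : L.Chain' (fun a b => a.1 = b.1 ∨ a.2 = b.2) := by
    show List.IsChain _ L
    rw [List.isChain_iff_getElem]
    intro i hi
    rw [hlen] at hi
    have h1 : i < L.length := by omega
    have h2 : i + 1 < L.length := by omega
    have e1 : L[i]'h1 = g ⟨i, by omega⟩ := by simp [hL, List.get_ofFn]
    have e2 : L[i+1]'h2 = g ⟨i+1, by omega⟩ := by simp [hL, List.get_ofFn]
    rw [e1, e2]
    rcases Nat.even_or_odd i with he | ho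
    · right
      have hmod : i % 2 = 0 := Nat.even_iff.mp he
      simp only [hg]
      congr 1
      apply Fin.ext
      simp only
      omega
    · left
      have hmod : i % 2 = 1 := Nat.odd_iff.mp ho
      have hmod2 : (i+1) % 2 = 0 := by omega
      simp only [hg, hmod, hmod2, if_pos, if_neg]
      norm_num
      have hlt : i/2 + 1 < k := by omega
      have hv : (i/2 + 1) % k = (i+1)/2 := by
        rw [Nat.mod_eq_of_lt hlt]; omega
      congr 1
      exact Fin.ext hv
  have key := chain_card L hne hchain
  -- L's edges are in E
  have hsub : L.toFinset ⊆ E.toFinset := by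
    intro x hx
    rw [List.mem_toFinset, hL, List.mem_ofFn] at hx
    obtain ⟨m, hm⟩ := hx
    rw [Multiset.mem_toFinset, hE, Multiset.mem_add]
    rcases Nat.even_or_odd m.val with he | ho
    · left
      rw [Multiset.mem_map]
      refine ⟨⟨m.val/2, by omega⟩, by simp, ?_⟩
      rw [← hm]
      simp [hg, Nat.even_iff.mp he]
    · right
      rw [Multiset.mem_map]
      refine ⟨⟨m.val/2, by omega⟩, by simp, ?_⟩
      rw [← hm]
      simp [hg, Nat.odd_iff.mp ho]
  -- E has at most k distinct edges
  have hEcard : E.toFinset.card ≤ k := by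
    have hcard : Multiset.card E = 2*k := by
      rw [hE]
      simp
      omega
    have hsum : ∑ a ∈ E.toFinset, E.count a = Multiset.card E :=
      Multiset.toFinset_sum_count_eq E
    have : 2 * E.toFinset.card ≤ ∑ a ∈ E.toFinset, E.count a := by
      calc 2 * E.toFinset.card = ∑ _a ∈ E.toFinset, 2 := by
            rw [Finset.sum_const, smul_eq_mul, Nat.mul_comm]
        _ ≤ ∑ a ∈ E.toFinset, E.count a :=
            Finset.sum_le_sum fun a ha => hmult a (Multiset.mem_toFinset.mp ha)
    omega
  -- T values among snd's, I values among fst's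
  have hT : Finset.image T Finset.univ ⊆ (L.map Prod.snd).toFinset := by
    intro x hx
    rw [Finset.mem_image] at hx
    obtain ⟨ℓ, -, hℓ⟩ := hx
    rw [List.mem_toFinset, List.mem_map]
    refine ⟨g ⟨2*ℓ.val, by omega⟩, by rw [hL]; exact List.mem_ofFn.mpr ⟨_, rfl⟩, ?_⟩
    rw [← hℓ]
    simp only [hg]
    congr 1
    apply Fin.ext
    simp only
    omega
  have hI : Finset.image I Finset.univ ⊆ (L.map Prod.fst).toFinset := by
    intro x hx
    rw [Finset.mem_image] at hx
    obtain ⟨ℓ, -, hℓ⟩ := hx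
    rw [List.mem_toFinset, List.mem_map]
    refine ⟨g ⟨2*ℓ.val, by omega⟩, by rw [hL]; exact List.mem_ofFn.mpr ⟨_, rfl⟩, ?_⟩
    rw [← hℓ]
    have : (2*ℓ.val) % 2 = 0 := by omega
    simp only [hg, this, if_pos]
    congr 1
    apply Fin.ext
    simp only
    omega
  have c1 := Finset.card_le_card hT
  have c2 := Finset.card_le_card hI
  have c3 := Finset.card_le_card hsub
  have c4 : (Finset.image I Finset.univ).card ≤ k := by
    calc (Finset.image I Finset.univ).card ≤ Finset.univ.card := Finset.card_image_le
    _ = k := by simp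
  omega
end

section
/- The moments of the Marčenko–Pastur law with parameter γ > 0 are given by β_k(γ) = Σ_{r=1}^{k} (1/r) C(k, r-1) C(k-1, r-1) γ^{r-1} for every k ≥ 1. -/
open MeasureTheory

/-- The Marčenko–Pastur law with parameter `γ > 0`: density
`sqrt((b_γ - x)(x - a_γ)) / (2πγx)` on `[a_γ, b_γ]` with `a_γ = (1-√γ)²`,
`b_γ = (1+√γ)²`, plus a point mass `1 - 1/γ` at `0` when `γ > 1`. -/
noncomputable def mpLaw (γ : ℝ) : Measure ℝ :=
  (volume.withDensity fun x =>
    ENNReal.ofReal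
      (if (1 - Real.sqrt γ) ^ 2 ≤ x ∧ x ≤ (1 + Real.sqrt γ) ^ 2 then
        Real.sqrt (((1 + Real.sqrt γ) ^ 2 - x) * (x - (1 - Real.sqrt γ) ^ 2)) /
          (2 * Real.pi * γ * x)
      else 0)) +
  ENNReal.ofReal (1 - 1 / γ) • Measure.dirac 0

open Real Finset intervalIntegral
open scoped NNReal ENNReal

namespace MPaux

lemma triple (m r j : ℕ) (hjr : j ≤ r) (hrm : r ≤ m) :
    m.choose (2*j) * ((2*j).choose j) * ((m - 2*j).choose (r - j))
      = m.choose r * (r.choose j) * ((m - r).choose j) := by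
  by_cases h2j : 2*j ≤ m
  · by_cases hrj : r + j ≤ m
    · have e1 : m.choose (2*j) * ((2*j).choose j) = m.choose j * ((m - j).choose j) := by
        have := Nat.choose_mul (n := m) (k := 2*j) (s := j) (by omega)
        simpa [show 2*j - j = j by omega] using this
      have e2 : m.choose r * (r.choose j) = m.choose j * ((m - j).choose (r - j)) := by
        exact Nat.choose_mul hjr
      have e3 : (m - j).choose r * (r.choose j)
          = (m - j).choose j * ((m - 2*j).choose (r - j)) := by
        have := Nat.choose_mul (n := m - j) (k := r) (s := j) hjr
        simpa [show m - j - j = m - 2*j by omega] using this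
      have e4 : (m - j).choose r * (r.choose (r - j))
          = (m - j).choose (r - j) * ((m - r).choose j) := by
        have := Nat.choose_mul (n := m - j) (k := r) (s := r - j) (by omega)
        simpa [show m - j - (r - j) = m - r by omega, show r - (r - j) = j by omega] using this
      calc m.choose (2*j) * ((2*j).choose j) * ((m - 2*j).choose (r - j))
          = m.choose j * ((m - j).choose j * ((m - 2*j).choose (r - j))) := by rw [e1]; ring
        _ = m.choose j * ((m - j).choose r * (r.choose j)) := by rw [e3]
        _ = m.choose j * ((m - j).choose r * (r.choose (r - j))) := by
            rw [Nat.choose_symm hjr]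
        _ = m.choose j * ((m - j).choose (r - j) * ((m - r).choose j)) := by rw [e4]
        _ = m.choose j * ((m - j).choose (r - j)) * ((m - r).choose j) := by ring
        _ = m.choose r * (r.choose j) * ((m - r).choose j) := by rw [← e2]
    · have h1 : (m - 2*j).choose (r - j) = 0 := Nat.choose_eq_zero_of_lt (by omega)
      have h2 : (m - r).choose j = 0 := Nat.choose_eq_zero_of_lt (by omega)
      simp [h1, h2]
  · have h1 : m.choose (2*j) = 0 := Nat.choose_eq_zero_of_lt (by omega)
    have h2 : (m - r).choose j = 0 := Nat.choose_eq_zero_of_lt (by omega)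
    simp [h1, h2]

lemma vander (m r : ℕ) (hrm : r ≤ m) :
    ∑ j ∈ range (m+1), (r+1).choose (j+1) * (m - r).choose j = (m+1).choose r := by
  have key : (m+1).choose r = ((r+1) + (m-r)).choose (m - r + 1) := by
    rw [show (r+1) + (m-r) = m + 1 by omega]
    rw [← Nat.choose_symm (by omega)]
    congr 1
    omega
  rw [key, Nat.add_choose_eq, Finset.Nat.sum_antidiagonal_eq_sum_range_succ_mk]
  rw [Finset.sum_range_succ' _ (m - r + 1)]
  have h0 : (r+1).choose 0 * (m - r).choose (m - r + 1 - 0) = 0 := by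
    simp [Nat.choose_eq_zero_of_lt]
  rw [h0, add_zero]
  have step : ∀ j ∈ range (m - r + 1),
      (r+1).choose (j+1) * (m-r).choose (m - r + 1 - (j+1))
        = (r+1).choose (j+1) * (m-r).choose j := by
    intro j hj
    simp only [mem_range] at hj
    rw [show m - r + 1 - (j+1) = m - r - j by omega, Nat.choose_symm (by omega)]
  rw [Finset.sum_congr rfl step]
  symm
  apply Finset.sum_subset
  · intro j hj; simp only [mem_range] at *; omega
  · intro j _ hj
    simp only [mem_range, not_lt] at hj
    have : (m - r).choose j = 0 := Nat.choose_eq_zero_of_lt (by omega)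
    simp [this]

lemma perR (m r : ℕ) (hrm : r ≤ m) :
    ∑ j ∈ range (r+1),
        (m.choose (2*j) : ℝ) * ((2*j).choose j) / (j+1) * ((m - 2*j).choose (r - j))
      = ((m+1).choose r : ℝ) * (m.choose r) / (r+1) := by
  have step : ∀ j ∈ range (r+1),
      (m.choose (2*j) : ℝ) * ((2*j).choose j) / (j+1) * ((m - 2*j).choose (r - j))
        = (m.choose r : ℝ) / (r+1) * ((r+1).choose (j+1) * ((m - r).choose j)) := by
    intro j hj
    simp only [mem_range] at hj
    have hjr : j ≤ r := by omega
    have ht := triple m r j hjr hrm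
    have ht' : (m.choose (2*j) : ℝ) * ((2*j).choose j) * ((m - 2*j).choose (r - j))
        = (m.choose r : ℝ) * (r.choose j) * ((m - r).choose j) := by exact_mod_cast congrArg Nat.cast ht
    have hc : ((r:ℝ)+1) * (r.choose j) = ((r+1).choose (j+1)) * ((j:ℝ)+1) := by
      have := Nat.add_one_mul_choose_eq r j
      exact_mod_cast congrArg Nat.cast this
    have hj1 : ((j:ℝ)+1) ≠ 0 := by positivity
    have hr1 : ((r:ℝ)+1) ≠ 0 := by positivity
    have key : (m.choose (2*j) : ℝ) * ((2*j).choose j) * ((m - 2*j).choose (r - j)) * ((r:ℝ)+1)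
        = (m.choose r : ℝ) * ((r+1).choose (j+1)) * ((m - r).choose j) * ((j:ℝ)+1) := by
      calc (m.choose (2*j) : ℝ) * ((2*j).choose j) * ((m - 2*j).choose (r - j)) * ((r:ℝ)+1)
          = (m.choose r : ℝ) * (r.choose j) * ((m - r).choose j) * ((r:ℝ)+1) := by rw [ht']
        _ = (m.choose r : ℝ) * ((m - r).choose j) * (((r:ℝ)+1) * (r.choose j)) := by ring
        _ = _ := by rw [hc]; ring
    field_simp
    linear_combination key
  rw [Finset.sum_congr rfl step, ← Finset.mul_sum]
  have : ∑ j ∈ range (r+1), ((r+1).choose (j+1) * ((m - r).choose j) : ℝ)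
      = ((m+1).choose r : ℝ) := by
    rw [← vander m r hrm]
    push_cast
    apply Finset.sum_subset
    · intro j hj; simp only [mem_range] at *; omega
    · intro j _ hj
      simp only [mem_range, not_lt] at hj
      have : (r+1).choose (j+1) = 0 := Nat.choose_eq_zero_of_lt (by omega)
      simp [this]
  rw [this]; ring

lemma combMain (m : ℕ) (x : ℝ) :
    ∑ j ∈ range (m+1),
        (m.choose (2*j) : ℝ) * ((2*j).choose j) / (j+1) * (1+x)^(m-2*j) * x^j
      = ∑ r ∈ range (m+1), ((m+1).choose r : ℝ) * (m.choose r) / (r+1) * x^r := by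
  set F : ℕ → ℕ → ℝ := fun j s =>
    (m.choose (2*j) : ℝ) * ((2*j).choose j) / (j+1) * ((m - 2*j).choose s) * x^(j+s) with hF
  have step1 : ∀ j ∈ range (m+1),
      (m.choose (2*j) : ℝ) * ((2*j).choose j) / (j+1) * (1+x)^(m-2*j) * x^j
        = ∑ s ∈ range (2*m+1-j), F j s := by
    intro j hj
    simp only [mem_range] at hj
    have hb : (1+x)^(m-2*j) = ∑ s ∈ range (m - 2*j + 1), ((m-2*j).choose s : ℝ) * x^s := by
      rw [add_comm 1 x, add_pow]
      exact Finset.sum_congr rfl (fun s _ => by ring)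
    have hb2 : (1+x)^(m-2*j) = ∑ s ∈ range (2*m+1-j), ((m-2*j).choose s : ℝ) * x^s := by
      rw [hb]
      apply Finset.sum_subset
      · intro s hs; simp only [mem_range] at *; omega
      · intro s _ hs
        simp only [mem_range, not_lt] at hs
        have : (m - 2*j).choose s = 0 := Nat.choose_eq_zero_of_lt (by omega)
        simp [this]
    rw [hb2, Finset.mul_sum, Finset.sum_mul]
    exact Finset.sum_congr rfl (fun s _ => by simp only [hF]; ring)
  rw [Finset.sum_congr rfl step1]
  have step2 : ∑ j ∈ range (m+1), ∑ s ∈ range (2*m+1-j), F j s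
      = ∑ j ∈ range (2*m+1), ∑ s ∈ range (2*m+1-j), F j s := by
    apply Finset.sum_subset
    · intro j hj; simp only [mem_range] at *; omega
    · intro j _ hj
      simp only [mem_range, not_lt] at hj
      apply Finset.sum_eq_zero
      intro s _
      have : m.choose (2*j) = 0 := Nat.choose_eq_zero_of_lt (by omega)
      simp [hF, this]
  rw [step2, ← Finset.sum_range_diag_flip (2*m+1) F]
  have step3 : ∀ r ∈ range (2*m+1), ∑ j ∈ range (r+1), F j (r - j)
      = if r < m+1 then ((m+1).choose r : ℝ) * (m.choose r) / (r+1) * x^r else 0 := by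
    intro r hr
    simp only [mem_range] at hr
    by_cases hrm : r < m + 1
    · rw [if_pos hrm]
      have : ∀ j ∈ range (r+1), F j (r - j)
          = (m.choose (2*j) : ℝ) * ((2*j).choose j) / (j+1) * ((m - 2*j).choose (r-j)) * x^r := by
        intro j hj
        simp only [mem_range] at hj
        simp only [hF, show j + (r - j) = r by omega]
      rw [Finset.sum_congr rfl this, ← Finset.sum_mul, perR m r (by omega)]
    · rw [if_neg hrm]
      apply Finset.sum_eq_zero
      intro j hj
      simp only [mem_range] at hj
      by_cases h2j : 2*j ≤ m
      · have : (m - 2*j).choose (r - j) = 0 := Nat.choose_eq_zero_of_lt (by omega)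
        simp [hF, this]
      · have : m.choose (2*j) = 0 := Nat.choose_eq_zero_of_lt (by omega)
        simp [hF, this]
  rw [Finset.sum_congr rfl step3]
  have shrink : ∑ r ∈ range (2*m+1),
      (if r < m+1 then ((m+1).choose r : ℝ) * (m.choose r) / (r+1) * x^r else 0)
      = ∑ r ∈ range (m+1),
      (if r < m+1 then ((m+1).choose r : ℝ) * (m.choose r) / (r+1) * x^r else 0) := by
    symm
    apply Finset.sum_subset
    · intro r hr; simp only [mem_range] at *; omega
    · intro r _ hr
      simp only [mem_range, not_lt] at hr
      rw [if_neg (by omega)]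
  rw [shrink]
  exact Finset.sum_congr rfl fun r hr => if_pos (mem_range.mp hr)



noncomputable def Sv (i : ℕ) : ℝ := ∫ θ in (-(π/2))..(π/2), sin θ ^ i

lemma Sv_rec (i : ℕ) : Sv (i+2) = (i+1)/(i+2) * Sv i := by
  unfold Sv
  rw [integral_sin_pow i]
  simp [Real.cos_pi_div_two]

lemma Sv_zero : Sv 0 = π := by
  unfold Sv
  simp

lemma Sv_one : Sv 1 = 0 := by
  unfold Sv
  simp [integral_sin]

lemma Sv_even (j : ℕ) : Sv (2*j) = π * ((2*j).choose j) / 4^j := by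
  induction j with
  | zero => simpa using Sv_zero
  | succ j ih =>
    have h : 2*(j+1) = 2*j + 2 := by ring
    rw [h, Sv_rec, ih]
    have hc : ((j:ℝ)+1) * ((2*j+2).choose (j+1) : ℝ) = 2*(2*(j:ℝ)+1) * ((2*j).choose j : ℝ) := by
      have := Nat.succ_mul_centralBinom_succ j
      have h2 : (j+1) * (2*j+2).choose (j+1) = 2 * (2*j+1) * ((2*j).choose j) := by
        simpa [Nat.centralBinom, show 2*(j+1) = 2*j+2 by ring] using this
      exact_mod_cast congrArg (Nat.cast (R := ℝ)) h2
    have h4 : (4:ℝ)^(j+1) = 4 * 4^j := by ring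
    have hne1 : ((j:ℝ)+1) ≠ 0 := by positivity
    have hne2 : (4:ℝ)^j ≠ 0 := by positivity
    have hne3 : (2*(j:ℝ)+2) ≠ 0 := by positivity
    rw [show ((2*j:ℕ):ℝ) + 1 = 2*(j:ℝ)+1 by push_cast; ring,
        show ((2*j:ℕ):ℝ) + 2 = 2*(j:ℝ)+2 by push_cast; ring, h4]
    field_simp
    linear_combination (-2) * hc

lemma Sv_odd (j : ℕ) : Sv (2*j+1) = 0 := by
  induction j with
  | zero => simpa using Sv_one
  | succ j ih =>
    have h : 2*(j+1)+1 = (2*j+1) + 2 := by ring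
    rw [h, Sv_rec, ih, mul_zero]

lemma Wval (i : ℕ) : (∫ t in (-1:ℝ)..1, t^i * Real.sqrt (1 - t^2)) = Sv i / (i+2) := by
  have hg : Continuous fun t : ℝ => t^i * Real.sqrt (1 - t^2) := by
    apply Continuous.mul (continuous_pow i)
    exact Real.continuous_sqrt.comp (continuous_const.sub (continuous_pow 2))
  have sub : (∫ θ in (-(π/2))..(π/2), cos θ • (sin θ ^ i * Real.sqrt (1 - sin θ ^ 2)))
      = ∫ t in Real.sin (-(π/2))..Real.sin (π/2), t^i * Real.sqrt (1 - t^2) := by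
    exact integral_comp_smul_deriv (fun x _ => Real.hasDerivAt_sin x)
      Real.continuous_cos.continuousOn hg
  rw [Real.sin_pi_div_two, show Real.sin (-(π/2)) = -1 by simp] at sub
  rw [← sub]
  have congr1 : ∀ θ ∈ Set.uIcc (-(π/2)) (π/2),
      cos θ • (sin θ ^ i * Real.sqrt (1 - sin θ ^ 2)) = sin θ ^ i - sin θ ^ (i+2) := by
    intro θ hθ
    have hθ' : θ ∈ Set.Icc (-(π/2)) (π/2) := by
      rwa [Set.uIcc_of_le (by linarith [Real.pi_pos])] at hθ
    have hcos : 0 ≤ cos θ := Real.cos_nonneg_of_mem_Icc hθ'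
    have h1 : 1 - sin θ ^ 2 = cos θ ^ 2 := by
      have := Real.sin_sq_add_cos_sq θ
      linarith
    rw [h1, Real.sqrt_sq hcos]
    simp only [smul_eq_mul]
    have h2 : sin θ ^ 2 + cos θ ^ 2 = 1 := Real.sin_sq_add_cos_sq θ
    linear_combination (sin θ ^ i) * h2
  rw [intervalIntegral.integral_congr congr1]
  rw [intervalIntegral.integral_sub (f := fun θ => sin θ ^ i) (g := fun θ => sin θ ^ (i+2))
    ((Real.continuous_sin.pow i).intervalIntegrable _ _)
    ((Real.continuous_sin.pow (i+2)).intervalIntegrable _ _)]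
  have : (∫ θ in (-(π/2))..(π/2), sin θ ^ i) = Sv i := rfl
  have h2 : (∫ θ in (-(π/2))..(π/2), sin θ ^ (i+2)) = Sv (i+2) := rfl
  rw [this, h2, Sv_rec]
  have : ((i:ℝ)+2) ≠ 0 := by positivity
  field_simp
  ring

lemma Jval (γ : ℝ) (hγ : 0 < γ) (m : ℕ) :
    (∫ x in ((1-Real.sqrt γ)^2)..((1+Real.sqrt γ)^2),
        x^m * Real.sqrt (((1+Real.sqrt γ)^2 - x) * (x - (1-Real.sqrt γ)^2)))
      = ∑ i ∈ range (m+1),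
          (m.choose i : ℝ) * (1+γ)^(m-i) * (2*Real.sqrt γ)^(i+2) * (Sv i / (i+2)) := by
  have hs : 0 < Real.sqrt γ := Real.sqrt_pos.mpr hγ
  have hs2 : Real.sqrt γ ^ 2 = γ := Real.sq_sqrt hγ.le
  set s := Real.sqrt γ with hsdef
  set c : ℝ := 1 + γ with hc
  set d : ℝ := 2 * s with hd
  have hd0 : d ≠ 0 := by positivity
  have ha : (1 - s)^2 = d * (-1) + c := by rw [hc, ← hs2, hd]; ring
  have hb' : (1 + s)^2 = d * 1 + c := by rw [hc, ← hs2, hd]; ring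
  have key := intervalIntegral.integral_comp_mul_add
    (a := (-1:ℝ)) (b := 1)
    (f := fun x => x^m * Real.sqrt (((1+s)^2 - x) * (x - (1-s)^2))) hd0 c
  rw [← ha, ← hb', smul_eq_mul] at key
  have key2 : (∫ x in ((1-s)^2)..((1+s)^2), x^m * Real.sqrt (((1+s)^2 - x) * (x - (1-s)^2)))
      = d * ∫ t in (-1:ℝ)..1,
          (d*t+c)^m * Real.sqrt (((1+s)^2 - (d*t+c)) * ((d*t+c) - (1-s)^2)) := by
    rw [key, ← mul_assoc, mul_inv_cancel₀ hd0, one_mul]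
  rw [key2]
  have point : ∀ t : ℝ, (d*t+c)^m * Real.sqrt (((1+s)^2 - (d*t+c)) * ((d*t+c) - (1-s)^2))
      = ∑ i ∈ range (m+1),
          (m.choose i : ℝ) * c^(m-i) * d^(i+1) * (t^i * Real.sqrt (1 - t^2)) := by
    intro t
    have e1 : ((1+s)^2 - (d*t+c)) * ((d*t+c) - (1-s)^2) = d^2 * (1 - t^2) := by
      rw [hb', ha]; ring
    rw [e1, Real.sqrt_mul (sq_nonneg d), Real.sqrt_sq (by positivity : (0:ℝ) ≤ d)]
    rw [add_pow, Finset.sum_mul]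
    exact Finset.sum_congr rfl fun i _ => by rw [mul_pow]; ring
  rw [intervalIntegral.integral_congr (fun t _ => point t)]
  rw [intervalIntegral.integral_finset_sum (fun i _ =>
    (Continuous.intervalIntegrable (by fun_prop) _ _))]
  rw [Finset.mul_sum]
  refine Finset.sum_congr rfl fun i _ => ?_
  rw [intervalIntegral.integral_const_mul, Wval i]
  ring



lemma reduce (γ : ℝ) (hγ : 0 < γ) (n : ℕ) :
    (∫ x, x ^ (n+1) ∂(mpLaw γ))
      = (∫ x in ((1-Real.sqrt γ)^2)..((1+Real.sqrt γ)^2),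
          x^n * Real.sqrt (((1+Real.sqrt γ)^2 - x)*(x - (1-Real.sqrt γ)^2))) * (2*π*γ)⁻¹ := by
  rw [mpLaw]
  have hs : 0 < Real.sqrt γ := Real.sqrt_pos.mpr hγ
  set s := Real.sqrt γ with hsdef
  set A : ℝ := (1 - s)^2 with hA
  set B : ℝ := (1 + s)^2 with hB
  have hAB : A ≤ B := by nlinarith
  have hA0 : 0 ≤ A := sq_nonneg _
  have hπ : 0 < π := Real.pi_pos
  set φ : ℝ → ℝ := fun x =>
    if A ≤ x ∧ x ≤ B then Real.sqrt ((B - x)*(x - A)) / (2*π*γ*x) else 0 with hφ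
  set ψ : ℝ → ℝ := fun x => x^n * Real.sqrt ((B - x)*(x - A)) * (2*π*γ)⁻¹ with hψ
  have hφm : Measurable φ := by
    apply Measurable.ite
    · exact (measurableSet_Icc : MeasurableSet (Set.Icc A B))
    · fun_prop
    · fun_prop
  have hφ0 : ∀ x, 0 ≤ φ x := by
    intro x
    simp only [hφ]
    split_ifs with h
    · have hx0 : 0 ≤ x := le_trans hA0 h.1
      positivity
    · exact le_refl 0
  have hψc : Continuous ψ := by fun_prop
  have hindEq : ∀ x, ((φ x).toNNReal : ℝ≥0) • x^(n+1) = Set.indicator (Set.Icc A B) ψ x := by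
    intro x
    rw [NNReal.smul_def, Real.coe_toNNReal _ (hφ0 x)]
    by_cases hx : x ∈ Set.Icc A B
    · rw [Set.indicator_of_mem hx]
      simp only [hφ, hψ]
      rw [if_pos ⟨hx.1, hx.2⟩]
      by_cases hx0 : x = 0
      · subst hx0
        have hA0' : A = 0 := le_antisymm hx.1 hA0
        simp [hA0']
      · have h2 : (2:ℝ)*π*γ ≠ 0 := by positivity
        have hπ' := hπ.ne'
        have hγ' := hγ.ne'
        simp only [smul_eq_mul]
        field_simp
        ring
    · rw [Set.indicator_of_notMem hx]
      simp only [hφ]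
      rw [if_neg (by simpa [Set.mem_Icc] using hx)]
      simp
  have hInd : Integrable (Set.indicator (Set.Icc A B) ψ) volume :=
    (hψc.integrableOn_Icc).integrable_indicator measurableSet_Icc
  rw [show (volume.withDensity fun x => ENNReal.ofReal
        (if A ≤ x ∧ x ≤ B then Real.sqrt ((B - x)*(x - A)) / (2*π*γ*x) else 0))
      = volume.withDensity (fun x => (((φ x).toNNReal : ℝ≥0) : ℝ≥0∞)) from rfl]
  have hint1 : Integrable (fun x : ℝ => x^(n+1))
      (volume.withDensity fun x => (((φ x).toNNReal : ℝ≥0) : ℝ≥0∞)) := by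
    rw [integrable_withDensity_iff_integrable_smul hφm.real_toNNReal]
    exact (funext hindEq : (fun x => ((φ x).toNNReal : ℝ≥0) • x^(n+1)) = _) ▸ hInd
  have hint2 : Integrable (fun x : ℝ => x^(n+1)) (ENNReal.ofReal (1 - 1/γ) • Measure.dirac 0) := by
    apply Integrable.smul_measure _ ENNReal.ofReal_ne_top
    refine ⟨(continuous_pow (n+1)).aestronglyMeasurable, ?_⟩
    simp [HasFiniteIntegral, lintegral_dirac]
  rw [integral_add_measure hint1 hint2]
  have h2 : (∫ x : ℝ, x^(n+1) ∂(ENNReal.ofReal (1 - 1/γ) • Measure.dirac 0)) = 0 := by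
    rw [MeasureTheory.integral_smul_measure, MeasureTheory.integral_dirac]
    simp
  rw [h2, add_zero]
  rw [integral_withDensity_eq_integral_smul hφm.real_toNNReal]
  rw [show (fun x => ((φ x).toNNReal : ℝ≥0) • x^(n+1)) = Set.indicator (Set.Icc A B) ψ from
    funext hindEq]
  rw [MeasureTheory.integral_indicator measurableSet_Icc, MeasureTheory.integral_Icc_eq_integral_Ioc,
    ← intervalIntegral.integral_of_le hAB]
  simp only [hψ]
  rw [intervalIntegral.integral_mul_const]

end MPaux

theorem mp_moments (γ : ℝ) (hγ : 0 < γ) (k : ℕ) (hk : 1 ≤ k) :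
    ∫ x, x ^ k ∂(mpLaw γ)
      = ∑ r ∈ Finset.Icc 1 k,
          (1 / (r : ℝ)) * (k.choose (r - 1) : ℝ) * ((k - 1).choose (r - 1) : ℝ) *
            γ ^ (r - 1) := by
  obtain ⟨m, rfl⟩ : ∃ m, k = m + 1 := ⟨k - 1, by omega⟩
  rw [MPaux.reduce γ hγ m, MPaux.Jval γ hγ m]
  have hs2 : Real.sqrt γ ^ 2 = γ := Real.sq_sqrt hγ.le
  have hπ : (0:ℝ) < π := Real.pi_pos
  set T : ℕ → ℝ := fun i =>
    (Nat.choose m i : ℝ) * (1+γ)^(m-i) * (2*Real.sqrt γ)^(i+2) * (MPaux.Sv i / (i+2)) with hT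
  have pr : ∀ (f : ℕ → ℝ) (n : ℕ), ∑ i ∈ range (2*n), f i
      = ∑ j ∈ range n, (f (2*j) + f (2*j+1)) := by
    intro f n
    induction n with
    | zero => simp
    | succ n ih =>
      rw [show 2*(n+1) = 2*n+1+1 by ring, Finset.sum_range_succ, Finset.sum_range_succ, ih,
        Finset.sum_range_succ]
      ring
  have ext : ∑ i ∈ range (m+1), T i = ∑ i ∈ range (2*(m+1)), T i := by
    apply Finset.sum_subset
    · exact Finset.range_subset_range.mpr (by omega)
    · intro i _ hi
      simp only [Finset.mem_range, not_lt] at hi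
      have : m.choose i = 0 := Nat.choose_eq_zero_of_lt (by omega)
      simp [hT, this]
  have odd0 : ∀ j, T (2*j+1) = 0 := by
    intro j; simp [hT, MPaux.Sv_odd]
  have evenT : ∀ j, T (2*j)
      = (m.choose (2*j) : ℝ) * ((2*j).choose j) / (j+1) * (1+γ)^(m-2*j) * γ^j * (2*π*γ) := by
    intro j
    simp only [hT]
    rw [MPaux.Sv_even j]
    have hp : (2*Real.sqrt γ)^(2*j+2) = 4^(j+1) * γ^(j+1) := by
      rw [show 2*j+2 = 2*(j+1) by ring, pow_mul, mul_pow, hs2]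
      norm_num
      ring
    rw [hp]
    have c1 : ((2*j:ℕ):ℝ) + 2 = 2*(j:ℝ)+2 := by push_cast; ring
    rw [c1]
    have h1 : ((j:ℝ)+1) ≠ 0 := by positivity
    have h2 : (2*(j:ℝ)+2) ≠ 0 := by positivity
    have h3 : ((4:ℝ)^j) ≠ 0 := by positivity
    field_simp
    ring
  have step : (∑ i ∈ range (m+1),
        (m.choose i : ℝ) * (1+γ)^(m-i) * (2*Real.sqrt γ)^(i+2) * (MPaux.Sv i / (i+2)))
          * (2*π*γ)⁻¹
      = ∑ j ∈ range (m+1),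
          (m.choose (2*j) : ℝ) * ((2*j).choose j) / (j+1) * (1+γ)^(m-2*j) * γ^j := by
    have hne : (2*π*γ) ≠ 0 := by positivity
    rw [show (∑ i ∈ range (m+1),
        (m.choose i : ℝ) * (1+γ)^(m-i) * (2*Real.sqrt γ)^(i+2) * (MPaux.Sv i / (i+2)))
      = ∑ i ∈ range (m+1), T i from rfl]
    rw [ext, pr T (m+1)]
    rw [Finset.sum_congr rfl (fun j _ => by rw [odd0 j, add_zero, evenT j])]
    rw [Finset.sum_mul]
    exact Finset.sum_congr rfl fun j _ => by
      rw [mul_assoc _ (2*π*γ) (2*π*γ)⁻¹, mul_inv_cancel₀ hne, mul_one]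
  rw [step, MPaux.combMain m γ]
  rw [show (∑ r ∈ Finset.Icc 1 (m+1), (1/(r:ℝ)) * ((m+1).choose (r-1) : ℝ)
        * ((m+1-1).choose (r-1) : ℝ) * γ^(r-1))
      = ∑ r ∈ range (m+2), (1/(r:ℝ)) * ((m+1).choose (r-1) : ℝ)
        * ((m+1-1).choose (r-1) : ℝ) * γ^(r-1) from
    Finset.sum_subset (fun x hx => by simp only [Finset.mem_Icc, Finset.mem_range] at *; omega)
      (fun x hx hnx => by
        have hx0 : x = 0 := by simp only [Finset.mem_Icc, Finset.mem_range] at *; omega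
        subst hx0; norm_num)]
  rw [Finset.sum_range_succ' (fun r => (1/(r:ℝ)) * ((m+1).choose (r-1) : ℝ)
    * ((m+1-1).choose (r-1) : ℝ) * γ^(r-1)) (m+1)]
  norm_num
  refine Finset.sum_congr rfl fun i hi => ?_
  ring
end
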